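/- arXiv:2502.17142 — 5 statements merged into one kernel-verified Lean document; each statement's English description precedes it below -/
import Mathlib

section
/- Let A be a finite set, P a probability measure on A, and B ⊆ A. Suppose Neg ⊆ A, ε > 0, K ≥ 1, and F : B \ Neg → 𝒫(A) satisfy: (i) P({x}) ≤ ε·P(F(x)) for every x ∈ B \ Neg; (ii) for every y ∈ A, #{x ∈ B \ Neg : y ∈ F(x)} ≤ K. Then P(B) ≤ P(Neg) + ε·K. -/
open scoped Classical

/-- Deterministic core of the invariance lemma: if each point of `B \ Neg` maps to a
set of states of probability at least `P(x)/ε`, quasi-injectively (each `y` is hit by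
at most `K` points), then `P(B) ≤ P(Neg) + ε·K`. -/
theorem stmt4 {A : Type*} [Fintype A] [DecidableEq A]
    (P : A → ℝ) (hP : ∀ x, 0 ≤ P x) (hsum : ∑ x, P x = 1)
    (B Neg : Finset A) (ε K : ℝ) (hε : 0 < ε) (hK : 1 ≤ K)
    (F : A → Finset A)
    (h1 : ∀ x ∈ B \ Neg, P x ≤ ε * ∑ y ∈ F x, P y)
    (h2 : ∀ y : A, (((B \ Neg).filter (fun x => y ∈ F x)).card : ℝ) ≤ K) :
    ∑ x ∈ B, P x ≤ (∑ x ∈ Neg, P x) + ε * K := by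
  have step1 : ∑ x ∈ B, P x ≤ (∑ x ∈ Neg, P x) + ∑ x ∈ B \ Neg, P x := by
    have : ∑ x ∈ B, P x ≤ ∑ x ∈ Neg ∪ B, P x :=
      Finset.sum_le_sum_of_subset_of_nonneg Finset.subset_union_right
        (fun i _ _ => hP i)
    calc ∑ x ∈ B, P x ≤ ∑ x ∈ Neg ∪ B, P x := this
      _ = (∑ x ∈ Neg, P x) + ∑ x ∈ B \ Neg, P x := by
          rw [← Finset.union_sdiff_self_eq_union, Finset.sum_union Finset.disjoint_sdiff]
  have step2 : ∑ x ∈ B \ Neg, P x ≤ ε * ∑ x ∈ B \ Neg, ∑ y ∈ F x, P y := by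
    rw [Finset.mul_sum]
    exact Finset.sum_le_sum h1
  have key : ∑ x ∈ B \ Neg, ∑ y ∈ F x, P y
      = ∑ y : A, (((B \ Neg).filter (fun x => y ∈ F x)).card : ℝ) * P y := by
    have : ∀ x ∈ B \ Neg, ∑ y ∈ F x, P y = ∑ y : A, if y ∈ F x then P y else 0 := by
      intro x _
      rw [Finset.sum_ite_mem, Finset.univ_inter]
    rw [Finset.sum_congr rfl this, Finset.sum_comm]
    refine Finset.sum_congr rfl fun y _ => ?_
    rw [← Finset.sum_filter, Finset.sum_const, nsmul_eq_mul]
  have step3 : ∑ x ∈ B \ Neg, ∑ y ∈ F x, P y ≤ K := by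
    rw [key]
    calc ∑ y : A, (((B \ Neg).filter (fun x => y ∈ F x)).card : ℝ) * P y
        ≤ ∑ y : A, K * P y := by
          refine Finset.sum_le_sum fun y _ => mul_le_mul_of_nonneg_right (h2 y) (hP y)
      _ = K := by rw [← Finset.mul_sum, hsum, mul_one]
  calc ∑ x ∈ B, P x ≤ (∑ x ∈ Neg, P x) + ∑ x ∈ B \ Neg, P x := step1
    _ ≤ (∑ x ∈ Neg, P x) + ε * ∑ x ∈ B \ Neg, ∑ y ∈ F x, P y := by linarith
    _ ≤ (∑ x ∈ Neg, P x) + ε * K := by nlinarith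
end

section
/- Let p ≥ 2, n ≥ 1, and let (d_{ij})_{1≤i≠j≤p} be nonnegative integers with d_{ij} = d_{ji}. For σ = (σ_1=Id, σ_2,...,σ_p) ∈ S_n^{p-1}, let d_{ij}(σ) = #{u : σ_j(σ_i^{-1}(u)) = u} (number of points where σ_i and σ_j agree, interpreted via σ_{ij} = σ_j σ_i^{-1}). Then for any permutation τ ∈ S_p, #{σ ∈ {Id}×S_n^{p-1} : ∀ i≠j, d_{ij}(σ) ≥ d_{ij}} ≤ (n!)^{p-1} / ∏_{i=2}^p (max_{j<i} d_{τ(j)τ(i)})!. -/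
open scoped Classical
open Finset



private lemma lemA (n v : ℕ) :
    (univ.filter fun α : Equiv.Perm (Fin n) => v ≤ (univ.filter fun u => α u = u).card).card
      ≤ n.choose v * (n - v).factorial := by
  classical
  have hfix : ∀ S : Finset (Fin n), S.card = v →
      (univ.filter fun α : Equiv.Perm (Fin n) => ∀ x ∈ S, α x = x).card ≤ (n - v).factorial := by
    intro S hS
    have hcard : Fintype.card {x : Fin n // x ∉ S} = n - v := by
      rw [Fintype.card_subtype]
      have : (univ.filter fun x : Fin n => x ∉ S) = Sᶜ := by
        ext x; simp
      rw [this, Finset.card_compl, hS, Fintype.card_fin]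
    have htarget : (univ : Finset (Equiv.Perm {x : Fin n // x ∉ S})).card = (n - v).factorial := by
      rw [Finset.card_univ, Fintype.card_perm, hcard]
    rw [← htarget]
    apply Finset.card_le_card_of_injOn
      (fun α => if h : ∀ x : Fin n, x ∉ S ↔ α x ∉ S then α.subtypePerm (fun x => (h x).symm) else 1)
    · intro _ _; exact mem_univ _
    · intro α hα β hβ hab
      simp only [mem_coe, mem_filter, mem_univ, true_and] at hα hβ
      have hcondα : ∀ x : Fin n, x ∉ S ↔ α x ∉ S := by
        intro x
        constructor
        · intro hx hax
          have h2 : α x = x := α.injective (hα (α x) hax)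
          exact hx (h2 ▸ hax)
        · intro hax hx
          exact hax (by rw [hα x hx]; exact hx)
      have hcondβ : ∀ x : Fin n, x ∉ S ↔ β x ∉ S := by
        intro x
        constructor
        · intro hx hbx
          have h2 : β x = x := β.injective (hβ (β x) hbx)
          exact hx (h2 ▸ hbx)
        · intro hbx hx
          exact hbx (by rw [hβ x hx]; exact hx)
      simp only [dif_pos hcondα, dif_pos hcondβ] at hab
      apply Equiv.ext
      intro x
      by_cases hx : x ∈ S
      · rw [hα x hx, hβ x hx]
      · have := congrArg (fun (γ : Equiv.Perm {x : Fin n // x ∉ S}) => (γ ⟨x, hx⟩ : {x : Fin n // x ∉ S}).val) hab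
        simpa using this
  have hsub : (univ.filter fun α : Equiv.Perm (Fin n) => v ≤ (univ.filter fun u => α u = u).card)
      ⊆ (Finset.powersetCard v (univ : Finset (Fin n))).biUnion
        (fun S => univ.filter fun α : Equiv.Perm (Fin n) => ∀ x ∈ S, α x = x) := by
    intro α hα
    simp only [mem_filter, mem_univ, true_and] at hα
    obtain ⟨S, hS1, hS2⟩ := Finset.exists_subset_card_eq hα
    rw [Finset.mem_biUnion]
    refine ⟨S, ?_, ?_⟩
    · rw [Finset.mem_powersetCard]; exact ⟨subset_univ _, hS2⟩
    · simp only [mem_filter, mem_univ, true_and]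
      intro x hx
      have := hS1 hx
      simpa using this
  calc _ ≤ _ := Finset.card_le_card hsub
    _ ≤ ∑ S ∈ Finset.powersetCard v (univ : Finset (Fin n)),
          (univ.filter fun α : Equiv.Perm (Fin n) => ∀ x ∈ S, α x = x).card :=
        Finset.card_biUnion_le
    _ ≤ ∑ S ∈ Finset.powersetCard v (univ : Finset (Fin n)), (n - v).factorial := by
        apply Finset.sum_le_sum
        intro S hS
        exact hfix S (Finset.mem_powersetCard.mp hS).2
    _ = n.choose v * (n - v).factorial := by
        rw [Finset.sum_const, smul_eq_mul, Finset.card_powersetCard, Finset.card_univ,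
          Fintype.card_fin]


private lemma split_unique {β : Type*} :
    ∀ (l₁ l₁' : List β) {a : β} {l₂ l₂' : List β},
      (l₁ ++ a :: l₂).Nodup → l₁ ++ a :: l₂ = l₁' ++ a :: l₂' → l₁ = l₁' := by
  intro l₁
  induction l₁ with
  | nil =>
    intro l₁' a l₂ l₂' hnd heq
    cases l₁' with
    | nil => rfl
    | cons b t =>
      simp only [List.nil_append, List.cons_append, List.cons.injEq] at heq
      obtain ⟨rfl, heq2⟩ := heq
      exfalso
      have : a ∈ l₂ := by rw [heq2]; simp
      exact (List.nodup_cons.mp hnd).1 this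
  | cons b t ih =>
    intro l₁' a l₂ l₂' hnd heq
    cases l₁' with
    | nil =>
      simp only [List.cons_append, List.nil_append, List.cons.injEq] at heq
      obtain ⟨rfl, heq2⟩ := heq
      exfalso
      have : b ∈ t ++ b :: l₂ := by simp
      exact (List.nodup_cons.mp hnd).1 this
    | cons b' t' =>
      simp only [List.cons_append, List.cons.injEq] at heq
      obtain ⟨rfl, heq2⟩ := heq
      rw [ih t' (List.nodup_cons.mp hnd).2 heq2]

private lemma mem_prefix {β : Type*} (R : β → β → Prop) (l₁ l₂ : List β) (a b : β)
    (hpw : (l₁ ++ a :: l₂).Pairwise R) (hb : b ∈ l₁ ++ a :: l₂)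
    (hR : ¬ R a b) (hne : b ≠ a) : b ∈ l₁ := by
  rcases List.mem_append.mp hb with h | h
  · exact h
  · rcases List.mem_cons.mp h with h | h
    · exact absurd h hne
    · exfalso
      have := (List.pairwise_append.mp hpw).2.1
      exact hR ((List.pairwise_cons.mp this).1 b h)

private lemma key {ι α : Type*} [DecidableEq ι] [DecidableEq α] [Fintype α]
    (C : ι → (ι → α) → Finset α) (N : ι → ℕ) :
    ∀ (l : List ι) (T : Finset (ι → α)),
      (∀ f ∈ T, ∀ g ∈ T, (∀ i ∈ l, f i = g i) → f = g) →
      (∀ f ∈ T, ∀ i ∈ l, f i ∈ C i f) →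
      (∀ (l₁ : List ι) (i : ι) (l₂ : List ι), l = l₁ ++ i :: l₂ →
        ∀ f ∈ T, ∀ g ∈ T, (∀ j ∈ l₁, f j = g j) → C i f = C i g) →
      (∀ i ∈ l, ∀ f ∈ T, (C i f).card ≤ N i) →
      T.card ≤ (l.map N).prod := by
  intro l
  induction l with
  | nil =>
    intro T hinj _ _ _
    simp only [List.map_nil, List.prod_nil]
    refine Finset.card_le_one.mpr (fun f hf g hg => ?_) -- check arg order
    exact hinj f hf g hg (by intro i hi; simp at hi)
  | cons i l ih =>
    intro T hinj hmem hdep hcard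
    rcases T.eq_empty_or_nonempty with rfl | ⟨f₀, hf₀⟩
    · simp
    have hfib : ∀ a, (T.filter fun f => f i = a).card ≤ (l.map N).prod := by
      intro a
      apply ih
      · intro f hf g hg hag
        simp only [mem_filter] at hf hg
        refine hinj f hf.1 g hg.1 ?_
        intro j hj
        rcases List.mem_cons.mp hj with rfl | hj
        · rw [hf.2, hg.2]
        · exact hag j hj
      · intro f hf j hj
        simp only [mem_filter] at hf
        exact hmem f hf.1 j (List.mem_cons_of_mem _ hj)
      · intro l₁ j l₂ heq f hf g hg hag
        simp only [mem_filter] at hf hg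
        refine hdep (i :: l₁) j l₂ (by rw [heq]; rfl) f hf.1 g hg.1 ?_
        intro k hk
        rcases List.mem_cons.mp hk with rfl | hk
        · rw [hf.2, hg.2]
        · exact hag k hk
      · intro j hj f hf
        simp only [mem_filter] at hf
        exact hcard j (List.mem_cons_of_mem _ hj) f hf.1
    have himg : T.image (fun f => f i) ⊆ C i f₀ := by
      intro a ha
      obtain ⟨f, hf, rfl⟩ := Finset.mem_image.mp ha
      have h1 : f i ∈ C i f := hmem f hf i List.mem_cons_self
      have h2 : C i f = C i f₀ := hdep [] i l rfl f hf f₀ hf₀ (by intro j hj; simp at hj)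
      rw [← h2]; exact h1
    calc T.card = ∑ a ∈ T.image (fun f => f i), (T.filter fun f => f i = a).card := by
          apply Finset.card_eq_sum_card_fiberwise
          intro f hf
          exact Finset.mem_image_of_mem _ hf
      _ ≤ ∑ _a ∈ T.image (fun f => f i), (l.map N).prod := Finset.sum_le_sum (fun a _ => hfib a)
      _ = (T.image (fun f => f i)).card * (l.map N).prod := by rw [Finset.sum_const, smul_eq_mul]
      _ ≤ N i * (l.map N).prod := by
          apply Nat.mul_le_mul_right
          calc (T.image (fun f => f i)).card ≤ (C i f₀).card := Finset.card_le_card himg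
            _ ≤ N i := hcard i List.mem_cons_self f₀ hf₀
      _ = ((i :: l).map N).prod := by simp




private lemma lemA_left (n v : ℕ) (ρ : Equiv.Perm (Fin n)) :
    (univ.filter fun π : Equiv.Perm (Fin n) =>
        v ≤ (univ.filter fun u => (ρ * π⁻¹) u = u).card).card
      ≤ n.choose v * (n - v).factorial := by
  have heq : (univ.filter fun π : Equiv.Perm (Fin n) =>
        v ≤ (univ.filter fun u => (ρ * π⁻¹) u = u).card).card
      = (univ.filter fun α : Equiv.Perm (Fin n) =>
          v ≤ (univ.filter fun u => α u = u).card).card := by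
    apply Finset.card_bij' (fun π _ => ρ * π⁻¹) (fun γ _ => γ⁻¹ * ρ)
    · intro π hπ
      simp only [mem_filter, mem_univ, true_and] at hπ ⊢
      exact hπ
    · intro γ hγ
      simp only [mem_filter, mem_univ, true_and] at hγ ⊢
      have : ρ * (γ⁻¹ * ρ)⁻¹ = γ := by group
      rw [this]
      exact hγ
    · intro π _; group
    · intro γ _; group
  rw [heq]; exact lemA n v

private lemma lemA_right (n v : ℕ) (ρ : Equiv.Perm (Fin n)) :
    (univ.filter fun π : Equiv.Perm (Fin n) =>
        v ≤ (univ.filter fun u => (π * ρ⁻¹) u = u).card).card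
      ≤ n.choose v * (n - v).factorial := by
  have heq : (univ.filter fun π : Equiv.Perm (Fin n) =>
        v ≤ (univ.filter fun u => (π * ρ⁻¹) u = u).card).card
      = (univ.filter fun α : Equiv.Perm (Fin n) =>
          v ≤ (univ.filter fun u => α u = u).card).card := by
    apply Finset.card_bij' (fun π _ => π * ρ⁻¹) (fun γ _ => γ * ρ)
    · intro π hπ
      simp only [mem_filter, mem_univ, true_and] at hπ ⊢
      exact hπ
    · intro γ hγ
      simp only [mem_filter, mem_univ, true_and] at hγ ⊢
      have : γ * ρ * ρ⁻¹ = γ := by group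
      rw [this]
      exact hγ
    · intro π _; group
    · intro γ _; group
  rw [heq]; exact lemA n v

/-- Counting bound (Theorem "permcount"): for any `τ ∈ S_p`, the number of tuples
`σ ∈ {Id} × S_n^{p-1}` with `d_{ij}(σ) ≥ d_{ij}` for all `i ≠ j` is at most
`(n!)^{p-1} / ∏_{i=2}^p (max_{j<i} d_{τ(j)τ(i)})!`. -/
theorem stmt5 (p n : ℕ) (hp : 2 ≤ p) (hn : 1 ≤ n)
    (d : Fin p → Fin p → ℕ) (hsym : ∀ i j, d i j = d j i)
    (τ : Equiv.Perm (Fin p)) :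
    ((Finset.univ.filter (fun σ : Fin p → Equiv.Perm (Fin n) =>
        σ ⟨0, by omega⟩ = 1 ∧ ∀ i j, i ≠ j →
          d i j ≤ (Finset.univ.filter (fun u : Fin n => (σ j * (σ i)⁻¹) u = u)).card)).card : ℝ)
      ≤ ((n.factorial : ℝ)) ^ (p - 1) /
        ∏ i ∈ Finset.univ.filter (fun i : Fin p => (0 : ℕ) < (i : ℕ)),
          ((((Finset.univ.filter (fun j : Fin p => j < i)).sup
              (fun j => d (τ j) (τ i))).factorial : ℝ)) := by
  classical
  -- abbreviations
  set T : Finset (Fin p → Equiv.Perm (Fin n)) :=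
    Finset.univ.filter (fun σ : Fin p → Equiv.Perm (Fin n) =>
        σ ⟨0, by omega⟩ = 1 ∧ ∀ i j, i ≠ j →
          d i j ≤ (Finset.univ.filter (fun u : Fin n => (σ j * (σ i)⁻¹) u = u)).card) with hT
  set D : Fin p → ℕ := fun i => (Finset.univ.filter (fun j : Fin p => j < i)).sup
      (fun j => d (τ j) (τ i)) with hD
  have hgoalD : ∀ i : Fin p, (Finset.univ.filter (fun j : Fin p => j < i)).sup
      (fun j => d (τ j) (τ i)) = D i := fun i => by rw [hD]
  simp only [hgoalD]
  set idx0 : Fin p := ⟨0, by omega⟩ with hidx0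
  set S : Finset (Fin p) := Finset.univ.filter (fun i : Fin p => (0 : ℕ) < (i : ℕ)) with hS
  -- basic facts about T members
  have hTmem : ∀ σ ∈ T, σ idx0 = 1 ∧ ∀ i j : Fin p, i ≠ j →
      d i j ≤ (Finset.univ.filter (fun u : Fin n => (σ j * (σ i)⁻¹) u = u)).card := by
    intro σ hσ
    rw [hT, mem_filter] at hσ
    exact hσ.2
  have hfixle : ∀ γ : Equiv.Perm (Fin n), (Finset.univ.filter (fun u : Fin n => γ u = u)).card ≤ n :=
    fun γ => le_trans (Finset.card_filter_le _ _) (by simp)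
  -- the RHS is nonneg
  have hRHSpos : (0:ℝ) < ∏ i ∈ S, (((D i).factorial : ℝ)) := by
    apply Finset.prod_pos
    intro i _
    exact_mod_cast Nat.factorial_pos _
  -- the maximizer function m
  have hmex : ∀ i : Fin p, ∃ j : Fin p, 0 < (i:ℕ) → (j < i ∧ D i = d (τ j) (τ i)) := by
    intro i
    by_cases hi : 0 < (i:ℕ)
    · have hne : (Finset.univ.filter (fun j : Fin p => j < i)).Nonempty := by
        refine ⟨idx0, ?_⟩
        simp only [mem_filter, mem_univ, true_and]
        rw [Fin.lt_def]
        simpa [hidx0] using hi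
      obtain ⟨j, hj1, hj2⟩ := Finset.exists_mem_eq_sup _ hne (fun j => d (τ j) (τ i))
      exact ⟨j, fun _ => ⟨(mem_filter.mp hj1).2, hj2⟩⟩
    · exact ⟨i, fun h => absurd h hi⟩
  choose m hm using hmex
  -- degenerate case : some D i > n
  by_cases hDn : ∀ i : Fin p, 0 < (i:ℕ) → D i ≤ n
  swap
  · push_neg at hDn
    obtain ⟨i, hi, hDi⟩ := hDn
    have hTe : T = ∅ := by
      rw [Finset.eq_empty_iff_forall_notMem]
      intro σ hσ
      obtain ⟨hmi, hDe⟩ := hm i hi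
      have hne : τ (m i) ≠ τ i := fun h => (ne_of_lt hmi) (τ.injective h)
      have := (hTmem σ hσ).2 (τ (m i)) (τ i) hne
      rw [← hDe] at this
      exact absurd (le_trans this (hfixle _)) (by omega)
    rw [hTe]
    simp only [Finset.card_empty, Nat.cast_zero]
    positivity
  -- main case
  have hppos : 0 < p := by omega
  set z : Fin p := τ.symm idx0 with hz
  set c : ℕ → Fin p := fun k => m^[k] z with hc
  have hcsucc : ∀ k, c (k+1) = m (c k) := by
    intro k
    rw [hc]
    exact Function.iterate_succ_apply' m k z
  have hvalpos : ∀ i : Fin p, i ≠ idx0 → 0 < (i:ℕ) := by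
    intro i hi
    rcases Nat.eq_zero_or_pos (i:ℕ) with h | h
    · exact absurd (Fin.ext h) hi
    · exact h
  have hex : ∃ k, c k = idx0 := by
    by_contra hcon
    push_neg at hcon
    have hdec : ∀ k, (c k : ℕ) + k ≤ (z:ℕ) := by
      intro k
      induction k with
      | zero => simp [hc]
      | succ k ihk =>
        have h1 : 0 < (c k : ℕ) := hvalpos _ (hcon k)
        have h2 : c (k+1) < c k := by
          rw [hcsucc k]
          exact (hm (c k) h1).1
        rw [Fin.lt_def] at h2
        omega
    have := hdec ((z:ℕ)+1)
    omega
  set L : ℕ := Nat.find hex with hLdef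
  have hL0 : c L = idx0 := Nat.find_spec hex
  have hLmin : ∀ t, t < L → c t ≠ idx0 := fun t ht => Nat.find_min hex ht
  have hstep : ∀ t, t < L → c (t+1) < c t ∧ D (c t) = d (τ (c (t+1))) (τ (c t)) := by
    intro t ht
    have h1 := hm (c t) (hvalpos _ (hLmin t ht))
    rw [← hcsucc t] at h1
    exact h1
  have hanti : ∀ s t, s < t → t ≤ L → c t < c s := by
    intro s t
    induction t with
    | zero => omega
    | succ t iht =>
      intro hst htL
      have h1 : c (t+1) < c t := (hstep t (by omega)).1
      rcases Nat.lt_or_ge s t with h | h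
      · exact lt_trans h1 (iht h (by omega))
      · have : s = t := by omega
        subst this
        exact h1
  have hcinj : ∀ s t, s ≤ L → t ≤ L → c s = c t → s = t := by
    intro s t hs ht hst
    rcases Nat.lt_trichotomy s t with h | h | h
    · exact absurd hst (ne_of_gt (hanti s t h ht))
    · exact h
    · exact absurd hst (ne_of_lt (hanti t s h hs))
  set P : Finset (Fin p) := (Finset.range (L+1)).image c with hP
  have hPt : ∀ i ∈ P, ∃ t, t ≤ L ∧ c t = i := by
    intro i hi
    rw [hP, Finset.mem_image] at hi
    obtain ⟨t, ht, hct⟩ := hi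
    have := Finset.mem_range.mp ht
    exact ⟨t, by omega, hct⟩
  have htP : ∀ t, t ≤ L → c t ∈ P := by
    intro t ht
    rw [hP, Finset.mem_image]
    exact ⟨t, Finset.mem_range.mpr (by omega), rfl⟩
  have hPz : z ∈ P := by
    have : c 0 = z := by simp [hc]
    exact this ▸ htP 0 (by omega)
  have hP0 : idx0 ∈ P := hL0 ▸ htP L le_rfl
  have hτz : τ z = idx0 := by rw [hz]; exact τ.apply_symm_apply idx0
  -- prev function
  obtain ⟨prev, hprev⟩ : ∃ prev : Fin p → Fin p, ∀ t, 1 ≤ t → t ≤ L → prev (c t) = c (t-1) := by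
    refine ⟨fun i => if h : ∃ t', 1 ≤ t' ∧ t' ≤ L ∧ c t' = i then c (h.choose - 1) else i, ?_⟩
    intro t h1 hL
    have hex2 : ∃ t', 1 ≤ t' ∧ t' ≤ L ∧ c t' = c t := ⟨t, h1, hL, rfl⟩
    show (if h : ∃ t', 1 ≤ t' ∧ t' ≤ L ∧ c t' = c t then c (h.choose - 1) else c t) = c (t-1)
    rw [dif_pos hex2]
    obtain ⟨h1', h2', h3'⟩ := hex2.choose_spec
    rw [hcinj _ _ h2' hL h3']
  have hprevP : ∀ i, i ∈ P → i ≠ z → (∃ t, 1 ≤ t ∧ t ≤ L ∧ c t = i) := by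
    intro i hi hiz
    obtain ⟨t, htL, hct⟩ := hPt i hi
    have ht1 : 1 ≤ t := by
      rcases Nat.eq_zero_or_pos t with rfl | h
      · exfalso; apply hiz; rw [← hct]; simp [hc]
      · exact h
    exact ⟨t, ht1, htL, hct⟩
  set e : ℕ → Fin p := fun t => τ (c t) with he
  set rest : List (Fin p) := ((Finset.univ \ P).sort (· ≤ ·)).map τ with hrest
  set listP : List (Fin p) := (List.range (L+1)).map e with hlistP
  set l : List (Fin p) := listP ++ rest with hl
  have hlistPP : ∀ a ∈ listP, τ.symm a ∈ P := by
    intro a ha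
    rw [hlistP] at ha
    obtain ⟨t, ht, hta⟩ := List.mem_map.mp ha
    rw [List.mem_range] at ht
    rw [← hta, he]
    simp only [Equiv.symm_apply_apply]
    exact htP t (by omega)
  have hnodup : l.Nodup := by
    rw [hl, List.nodup_append]
    refine ⟨?_, ?_, ?_⟩
    · rw [hlistP]
      apply List.Nodup.map_on ?_ List.nodup_range
      intro t ht s hs hts
      rw [List.mem_range] at ht hs
      rw [he] at hts
      exact hcinj t s (by omega) (by omega) (τ.injective hts)
    · rw [hrest]
      exact ((Finset.univ \ P).sort_nodup _).map τ.injective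
    · intro a ha b ha' hab
      subst hab
      have h1 := hlistPP a ha
      rw [hrest] at ha'
      obtain ⟨j, hj, hja⟩ := List.mem_map.mp ha'
      rw [Finset.mem_sort, Finset.mem_sdiff] at hj
      apply hj.2
      rw [← hja] at h1
      simpa using h1
  have hU : ∀ a : Fin p, a ∈ l := by
    intro a
    rw [hl, List.mem_append]
    by_cases hP' : τ.symm a ∈ P
    · left
      obtain ⟨t, htL, hct⟩ := hPt _ hP'
      rw [hlistP]
      apply List.mem_map.mpr
      refine ⟨t, List.mem_range.mpr (by omega), ?_⟩
      simp only [he]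
      rw [hct]
      exact τ.apply_symm_apply a
    · right
      rw [hrest]
      apply List.mem_map.mpr
      refine ⟨τ.symm a, ?_, τ.apply_symm_apply a⟩
      rw [Finset.mem_sort]
      exact Finset.mem_sdiff.mpr ⟨mem_univ _, hP'⟩
  set φ : ℕ → ℕ := fun v => n.choose v * (n - v).factorial with hφ
  set C : Fin p → (Fin p → Equiv.Perm (Fin n)) → Finset (Equiv.Perm (Fin n)) :=
    fun a f => if a = idx0 then {1}
      else if τ.symm a ∈ P then
        Finset.univ.filter (fun π => d a (τ (prev (τ.symm a))) ≤
          (Finset.univ.filter (fun u : Fin n => (f (τ (prev (τ.symm a))) * π⁻¹) u = u)).card)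
      else
        Finset.univ.filter (fun π => d (τ (m (τ.symm a))) a ≤
          (Finset.univ.filter (fun u : Fin n => (π * (f (τ (m (τ.symm a))))⁻¹) u = u)).card) with hC
  set N : Fin p → ℕ := fun a => if a = idx0 then 1
      else if τ.symm a ∈ P then φ (d a (τ (prev (τ.symm a))))
      else φ (d (τ (m (τ.symm a))) a) with hN
  have hanez : ∀ a : Fin p, a ≠ idx0 → τ.symm a ≠ z := by
    intro a ha0 h
    apply ha0
    have h2 : a = τ (τ.symm a) := (τ.apply_symm_apply a).symm
    rw [h2, h, hτz]
  have hkey1 : ∀ f ∈ T, ∀ g ∈ T, (∀ i ∈ l, f i = g i) → f = g := by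
    intro f hf g hg hfg
    funext a
    exact hfg a (hU a)
  have hkey2 : ∀ f ∈ T, ∀ a ∈ l, f a ∈ C a f := by
    intro f hf a _
    obtain ⟨hf1, hf2⟩ := hTmem f hf
    simp only [hC]
    by_cases ha0 : a = idx0
    · rw [if_pos ha0, Finset.mem_singleton, ha0]
      exact hf1
    · rw [if_neg ha0]
      by_cases haP : τ.symm a ∈ P
      · rw [if_pos haP]
        obtain ⟨t, ht1, htL, hct⟩ := hprevP _ haP (hanez a ha0)
        have hprev' : prev (τ.symm a) = c (t-1) := by rw [← hct, hprev t ht1 htL]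
        have hne : a ≠ τ (prev (τ.symm a)) := by
          rw [hprev']
          intro h
          have h2 : τ.symm a = c (t-1) := by rw [h]; simp
          rw [← hct] at h2
          have := hcinj t (t-1) htL (by omega) h2
          omega
        simp only [mem_filter, mem_univ, true_and]
        exact hf2 a (τ (prev (τ.symm a))) hne
      · rw [if_neg haP]
        have h0 : 0 < ((τ.symm a : Fin p) : ℕ) := hvalpos _ (fun h => haP (h ▸ hP0))
        have hlt := (hm _ h0).1
        have hne : τ (m (τ.symm a)) ≠ a := by
          intro h
          have h2 : m (τ.symm a) = τ.symm a := by
            have := congrArg τ.symm h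
            simpa using this
          exact absurd h2 (ne_of_lt hlt)
        simp only [mem_filter, mem_univ, true_and]
        exact hf2 (τ (m (τ.symm a))) a hne
  have hkey3 : ∀ (l₁ : List (Fin p)) (a : Fin p) (l₂ : List (Fin p)), l = l₁ ++ a :: l₂ →
      ∀ f ∈ T, ∀ g ∈ T, (∀ j ∈ l₁, f j = g j) → C a f = C a g := by
    intro l₁ a l₂ heq f hf g hg hfg
    simp only [hC]
    by_cases ha0 : a = idx0
    · rw [if_pos ha0, if_pos ha0]
    · rw [if_neg ha0, if_neg ha0]
      by_cases haP : τ.symm a ∈ P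
      · rw [if_pos haP, if_pos haP]
        suffices h : τ (prev (τ.symm a)) ∈ l₁ by rw [hfg _ h]
        obtain ⟨t, ht1, htL, hct⟩ := hprevP _ haP (hanez a ha0)
        have hprev' : prev (τ.symm a) = c (t-1) := by rw [← hct, hprev t ht1 htL]
        have hsplit : l = ((List.range t).map e) ++ (e t) :: (((List.range' (t+1) (L-t)).map e) ++ rest) := by
          rw [hl, hlistP]
          have h1 : List.range (L+1) = List.range t ++ t :: List.range' (t+1) (L-t) := by
            rw [List.range_eq_range']
            have h2 := List.range'_append (s := 0) (m := t) (n := L+1-t) (step := 1)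
            simp only [one_mul, Nat.zero_add, Nat.add_zero, zero_add] at h2
            have h3 : t + (L + 1 - t) = L + 1 := by omega
            rw [h3] at h2
            rw [← h2, List.range_eq_range']
            congr 1
            have h4 : L + 1 - t = (L - t) + 1 := by omega
            rw [h4, List.range'_succ]
          rw [h1]
          simp [List.map_append]
        have hea : e t = a := by simp only [he]; rw [hct]; exact τ.apply_symm_apply a
        rw [hea] at hsplit
        have hl₁ : l₁ = (List.range t).map e :=
          split_unique l₁ _ (heq ▸ hnodup) (heq.symm.trans hsplit)
        rw [hl₁, hprev']
        apply List.mem_map.mpr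
        exact ⟨t-1, List.mem_range.mpr (by omega), rfl⟩
      · rw [if_neg haP, if_neg haP]
        suffices h : τ (m (τ.symm a)) ∈ l₁ by rw [hfg _ h]
        have harest : a ∈ rest := by
          have h1 := hU a
          rw [hl, List.mem_append] at h1
          rcases h1 with h | h
          · exact absurd (hlistPP a h) haP
          · exact h
        obtain ⟨r₁, r₂, hr⟩ := List.append_of_mem harest
        have hsplit : l = (listP ++ r₁) ++ a :: r₂ := by rw [hl, hr]; simp [List.append_assoc]
        have hl₁ : l₁ = listP ++ r₁ :=
          split_unique l₁ _ (heq ▸ hnodup) (heq.symm.trans hsplit)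
        rw [hl₁, List.mem_append]
        by_cases hmP : m (τ.symm a) ∈ P
        · left
          obtain ⟨s, hsL, hcs⟩ := hPt _ hmP
          rw [hlistP]
          exact List.mem_map.mpr ⟨s, List.mem_range.mpr (by omega), by simp only [he]; rw [hcs]⟩
        · right
          have hpw : rest.Pairwise (fun x y => (τ.symm x : Fin p) < (τ.symm y : Fin p)) := by
            rw [hrest]
            exact List.Pairwise.map τ (fun x y hxy => by simpa using hxy)
              (Finset.sortedLT_sort _).pairwise
          have hbrest : τ (m (τ.symm a)) ∈ rest := by
            rw [hrest]
            apply List.mem_map.mpr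
            refine ⟨m (τ.symm a), ?_, rfl⟩
            rw [Finset.mem_sort]
            exact Finset.mem_sdiff.mpr ⟨mem_univ _, hmP⟩
          have hlt := (hm (τ.symm a) (hvalpos _ (fun h => haP (h ▸ hP0)))).1
          apply mem_prefix (fun x y => (τ.symm x : Fin p) < (τ.symm y : Fin p)) r₁ r₂ a
            (τ (m (τ.symm a))) (hr ▸ hpw) (hr ▸ hbrest)
          · simp only [Equiv.symm_apply_apply]
            exact fun h => absurd hlt (asymm h)
          · intro h
            have h2 : m (τ.symm a) = τ.symm a := by
              have := congrArg τ.symm h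
              simpa using this
            exact absurd h2 (ne_of_lt hlt)
  have hkey4 : ∀ a ∈ l, ∀ f ∈ T, (C a f).card ≤ N a := by
    intro a _ f _
    simp only [hC, hN]
    by_cases ha0 : a = idx0
    · rw [if_pos ha0, if_pos ha0]
      simp
    · rw [if_neg ha0, if_neg ha0]
      by_cases haP : τ.symm a ∈ P
      · rw [if_pos haP, if_pos haP]
        simp only [hφ]
        exact lemA_left n _ _
      · rw [if_neg haP, if_neg haP]
        simp only [hφ]
        exact lemA_right n _ _
  have hcount : T.card ≤ (l.map N).prod := key C N l T hkey1 hkey2 hkey3 hkey4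
  -- evaluate the product
  have hNτz : N (τ z) = 1 := by
    simp only [hN, hτz, if_pos rfl]
  have hNτP : ∀ i : Fin p, i ≠ z → i ∈ P → N (τ i) = φ (D (prev i)) := by
    intro i hiz hiP
    obtain ⟨t, ht1, htL, hct⟩ := hprevP i hiP hiz
    have hprev' : prev i = c (t-1) := by rw [← hct, hprev t ht1 htL]
    have hτi0 : τ i ≠ idx0 := by
      intro h
      apply hiz
      have := congrArg τ.symm h
      rw [Equiv.symm_apply_apply] at this
      rw [this, hz]
    simp only [hN, Equiv.symm_apply_apply, if_neg hτi0, if_pos hiP]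
    congr 1
    rw [hprev']
    have hDe := (hstep (t-1) (by omega)).2
    have ht' : t - 1 + 1 = t := by omega
    rw [ht', hct] at hDe
    exact hDe.symm
  have hNτnP : ∀ i : Fin p, i ∉ P → N (τ i) = φ (D i) := by
    intro i hiP
    have hτi0 : τ i ≠ idx0 := by
      intro h
      apply hiP
      have := congrArg τ.symm h
      rw [Equiv.symm_apply_apply] at this
      rw [this, ← hz]
      exact hPz
    simp only [hN, Equiv.symm_apply_apply, if_neg hτi0, if_neg hiP]
    congr 1
    exact ((hm i (hvalpos _ (fun h => hiP (h ▸ hP0)))).2).symm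
  have hltoF : l.toFinset = Finset.univ := Finset.eq_univ_iff_forall.mpr
    (fun a => List.mem_toFinset.mpr (hU a))
  have hprodl : (l.map N).prod = ∏ a : Fin p, N a := by
    rw [← List.prod_toFinset N hnodup, hltoF]
  have hprodτ : ∏ a : Fin p, N a = ∏ i : Fin p, N (τ i) := (Equiv.prod_comp τ N).symm
  have herasez : ∏ i : Fin p, N (τ i) = ∏ i ∈ Finset.univ.erase z, N (τ i) := by
    rw [← Finset.mul_prod_erase Finset.univ _ (mem_univ z), hNτz, one_mul]
  have hsetA : (Finset.univ.erase z).filter (· ∈ P) = P.erase z := by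
    ext x
    simp only [Finset.mem_filter, Finset.mem_erase, Finset.mem_univ, and_true, true_and]
    try tauto
  have hsetB : (Finset.univ.erase z).filter (· ∉ P) = Finset.univ \ P := by
    ext x
    simp only [Finset.mem_filter, Finset.mem_erase, Finset.mem_univ, and_true, true_and,
      Finset.mem_sdiff]
    constructor
    · tauto
    · intro hx
      exact ⟨fun h => hx (h ▸ hPz), hx⟩
  have hsplitP : ∏ i ∈ Finset.univ.erase z, N (τ i)
      = (∏ i ∈ P.erase z, N (τ i)) * ∏ i ∈ Finset.univ \ P, N (τ i) := by
    rw [← hsetA, ← hsetB]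
    exact (Finset.prod_filter_mul_prod_filter_not _ _ _).symm
  have hprodP : ∏ i ∈ P.erase z, N (τ i) = ∏ j ∈ P.erase idx0, φ (D j) := by
    have h1 : ∏ i ∈ P.erase z, N (τ i) = ∏ i ∈ P.erase z, φ (D (prev i)) := by
      apply Finset.prod_congr rfl
      intro i hi
      obtain ⟨hiz, hiP⟩ := Finset.mem_erase.mp hi
      exact hNτP i hiz hiP
    rw [h1]
    apply Finset.prod_bij (fun i _ => prev i)
    · intro i hi
      obtain ⟨hiz, hiP⟩ := Finset.mem_erase.mp hi
      obtain ⟨t, ht1, htL, hct⟩ := hprevP i hiP hiz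
      have hprev' : prev i = c (t-1) := by rw [← hct, hprev t ht1 htL]
      rw [hprev', Finset.mem_erase]
      exact ⟨hLmin (t-1) (by omega), htP (t-1) (by omega)⟩
    · intro i hi i' hi' hpp
      obtain ⟨hiz, hiP⟩ := Finset.mem_erase.mp hi
      obtain ⟨hiz', hiP'⟩ := Finset.mem_erase.mp hi'
      obtain ⟨t, ht1, htL, hct⟩ := hprevP i hiP hiz
      obtain ⟨t', ht1', htL', hct'⟩ := hprevP i' hiP' hiz'
      have hA : prev i = c (t-1) := by rw [← hct, hprev t ht1 htL]
      have hB : prev i' = c (t'-1) := by rw [← hct', hprev t' ht1' htL']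
      rw [hA, hB] at hpp
      have := hcinj (t-1) (t'-1) (by omega) (by omega) hpp
      rw [← hct, ← hct']
      congr 1
      omega
    · intro j hj
      obtain ⟨hj0, hjP⟩ := Finset.mem_erase.mp hj
      obtain ⟨s, hsL, hcs⟩ := hPt j hjP
      have hsltL : s < L := by
        rcases Nat.lt_or_ge s L with h | h
        · exact h
        · exfalso
          have : s = L := by omega
          rw [this, hL0] at hcs
          exact hj0 hcs.symm
      refine ⟨c (s+1), ?_, ?_⟩
      · rw [Finset.mem_erase]
        constructor
        · intro h
          have hz0 : c 0 = z := by simp [hc]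
          rw [← hz0] at h
          have := hcinj (s+1) 0 (by omega) (by omega) h
          omega
        · exact htP (s+1) (by omega)
      · rw [hprev (s+1) (by omega) (by omega)]
        simpa using hcs
    · intro i hi
      rfl
  have hprodnP : ∏ i ∈ Finset.univ \ P, N (τ i) = ∏ j ∈ Finset.univ \ P, φ (D j) :=
    Finset.prod_congr rfl (fun i hi => hNτnP i (Finset.mem_sdiff.mp hi).2)
  have hdisj : Disjoint (P.erase idx0) (Finset.univ \ P) := by
    rw [Finset.disjoint_left]
    intro x hx hx'
    exact (Finset.mem_sdiff.mp hx').2 (Finset.mem_erase.mp hx).2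
  have hsetU : P.erase idx0 ∪ (Finset.univ \ P) = S := by
    ext x
    simp only [Finset.mem_union, Finset.mem_erase, Finset.mem_sdiff, Finset.mem_univ,
      true_and, hS, Finset.mem_filter]
    constructor
    · rintro (⟨h1, h2⟩ | h1)
      · exact hvalpos x h1
      · exact hvalpos x (fun h => h1 (h ▸ hP0))
    · intro hx
      have hx0 : x ≠ idx0 := by
        intro h
        rw [h, hidx0] at hx
        simp at hx
      by_cases hxP : x ∈ P
      · exact Or.inl ⟨hx0, hxP⟩
      · exact Or.inr hxP
  have hunion : (∏ j ∈ P.erase idx0, φ (D j)) * ∏ j ∈ Finset.univ \ P, φ (D j)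
      = ∏ j ∈ S, φ (D j) := by
    rw [← Finset.prod_union hdisj, hsetU]
  have hcount2 : T.card ≤ ∏ j ∈ S, φ (D j) := by
    rw [hprodl, hprodτ, herasez, hsplitP, hprodP, hprodnP, hunion] at hcount
    exact hcount
  -- final numeric inequality
  have hcardS : S.card = p - 1 := by
    have hSe : S = Finset.univ.erase idx0 := by
      ext x
      simp only [hS, Finset.mem_filter, Finset.mem_univ, true_and, Finset.mem_erase, and_true]
      constructor
      · intro h
        intro he'
        rw [he', hidx0] at h
        simp at h
      · exact hvalpos x
    rw [hSe, Finset.card_erase_of_mem (mem_univ _), Finset.card_univ, Fintype.card_fin]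
  have hfinal : T.card * ∏ i ∈ S, (D i).factorial ≤ n.factorial ^ (p-1) := by
    calc T.card * ∏ i ∈ S, (D i).factorial
        ≤ (∏ i ∈ S, φ (D i)) * ∏ i ∈ S, (D i).factorial := Nat.mul_le_mul_right _ hcount2
      _ = ∏ i ∈ S, (φ (D i) * (D i).factorial) := (Finset.prod_mul_distrib).symm
      _ = ∏ _i ∈ S, n.factorial := by
          apply Finset.prod_congr rfl
          intro i hi
          have hvi : 0 < (i:ℕ) := by
            rw [hS] at hi
            exact (Finset.mem_filter.mp hi).2
          have hDi : D i ≤ n := hDn i hvi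
          simp only [hφ]
          rw [mul_right_comm]
          exact Nat.choose_mul_factorial_mul_factorial hDi
      _ = n.factorial ^ (p-1) := by rw [Finset.prod_const, hcardS]
  rw [le_div_iff₀ hRHSpos]
  calc (T.card : ℝ) * ∏ i ∈ S, ((D i).factorial : ℝ)
      = ((T.card * ∏ i ∈ S, (D i).factorial : ℕ) : ℝ) := by push_cast; ring
    _ ≤ ((n.factorial ^ (p-1) : ℕ) : ℝ) := Nat.cast_le.mpr hfinal
    _ = (n.factorial : ℝ) ^ (p-1) := by push_cast; ring
end

section
/- Let p ≥ 1 and let (x_{ij})_{1≤i≠j≤p} be real numbers in [0,1] with x_{ij} = x_{ji}. For τ ∈ S_p set S_*(τ) = (1/(p-1)) ∑_{i=2}^p max_{j<i} x_{τ(j)τ(i)} (with S_* = 0 when p = 1). Then there exists τ ∈ S_p such that S_*(τ) ≥ (2S)/(1+S), where S = (1/(p(p-1))) ∑_{1≤i≠j≤p} x_{ij}². -/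
open scoped Classical

namespace Stmt13Aux

variable {p : ℕ}

/-- max of `x u v` over `u ∈ l`, with floor 0. -/
noncomputable def fold (x : Fin p → Fin p → ℝ) (l : List (Fin p)) (v : Fin p) : ℝ :=
  l.foldr (fun u r => max (x u v) r) 0

lemma le_fold (x : Fin p → Fin p → ℝ) {l : List (Fin p)} {u : Fin p} (hu : u ∈ l) (v : Fin p) :
    x u v ≤ fold x l v := by
  induction l with
  | nil => simp at hu
  | cons a t ih =>
    rcases List.mem_cons.mp hu with h | h
    · subst h; exact le_max_left _ _
    · exact le_trans (ih h) (le_max_right _ _)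

lemma fold_le (x : Fin p → Fin p → ℝ) {l : List (Fin p)} {v : Fin p} {c : ℝ} (hc : 0 ≤ c)
    (h : ∀ u ∈ l, x u v ≤ c) : fold x l v ≤ c := by
  induction l with
  | nil => exact hc
  | cons a t ih =>
    exact max_le (h a (by simp)) (ih fun u hu => h u (List.mem_cons_of_mem _ hu))

noncomputable def primNext (x : Fin p → Fin p → ℝ) (d : Fin p) (l : List (Fin p)) : Fin p :=
  if h : (Finset.univ \ l.toFinset : Finset (Fin p)).Nonempty then
    ((Finset.univ \ l.toFinset).exists_max_image (fun v => fold x l v) h).choose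
  else d

lemma primNext_spec (x : Fin p → Fin p → ℝ) (d : Fin p) {l : List (Fin p)}
    (h : (Finset.univ \ l.toFinset : Finset (Fin p)).Nonempty) :
    primNext x d l ∈ (Finset.univ \ l.toFinset : Finset (Fin p)) ∧
      ∀ v ∈ (Finset.univ \ l.toFinset : Finset (Fin p)),
        fold x l v ≤ fold x l (primNext x d l) := by
  rw [primNext, dif_pos h]
  obtain ⟨h1, h2⟩ := ((Finset.univ \ l.toFinset).exists_max_image
    (fun v => fold x l v) h).choose_spec
  exact ⟨h1, h2⟩

noncomputable def primList (x : Fin p → Fin p → ℝ) (d : Fin p) : ℕ → List (Fin p)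
  | 0 => [d]
  | (k+1) => primNext x d (primList x d k) :: primList x d k

noncomputable def primVert (x : Fin p → Fin p → ℝ) (d : Fin p) : ℕ → Fin p
  | 0 => d
  | (k+1) => primNext x d (primList x d k)

lemma primList_length (x : Fin p → Fin p → ℝ) (d : Fin p) (k : ℕ) :
    (primList x d k).length = k + 1 := by
  induction k with
  | zero => rfl
  | succ k ih => simp [primList, ih]

lemma primVert_mem (x : Fin p → Fin p → ℝ) (d : Fin p) {j k : ℕ} (h : j ≤ k) :
    primVert x d j ∈ primList x d k := by
  induction k with
  | zero => interval_cases j; simp [primList, primVert]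
  | succ k ih =>
    rcases Nat.lt_or_ge j (k+1) with h' | h'
    · exact List.mem_cons_of_mem _ (ih (Nat.lt_succ_iff.mp h'))
    · have : j = k + 1 := le_antisymm h h'
      subst this
      simp [primList, primVert]

lemma mem_primList (x : Fin p → Fin p → ℝ) (d : Fin p) {u : Fin p} {k : ℕ}
    (h : u ∈ primList x d k) : ∃ j ≤ k, u = primVert x d j := by
  induction k with
  | zero =>
    simp only [primList] at h
    rcases List.mem_singleton.mp h with rfl
    exact ⟨0, le_refl _, rfl⟩
  | succ k ih =>
    rcases List.mem_cons.mp h with h' | h'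
    · exact ⟨k+1, le_refl _, h'⟩
    · obtain ⟨j, hj, hju⟩ := ih h'
      exact ⟨j, le_trans hj (Nat.le_succ _), hju⟩

lemma compl_nonempty {l : List (Fin p)} (h : l.length < p) :
    (Finset.univ \ l.toFinset : Finset (Fin p)).Nonempty := by
  rw [Finset.sdiff_nonempty]
  intro hsub
  have h1 : (Finset.univ : Finset (Fin p)).card ≤ l.toFinset.card :=
    Finset.card_le_card hsub
  have h2 : l.toFinset.card ≤ l.length := l.toFinset_card_le
  simp only [Finset.card_univ, Fintype.card_fin] at h1
  omega

lemma primVert_fresh (x : Fin p → Fin p → ℝ) (d : Fin p) {k : ℕ} (h : k + 1 < p) :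
    primVert x d (k+1) ∉ primList x d k := by
  have hne := compl_nonempty (l := primList x d k) (by rw [primList_length]; omega)
  have := (primNext_spec x d hne).1
  rw [Finset.mem_sdiff] at this
  intro hmem
  exact this.2 (List.mem_toFinset.mpr hmem)

lemma primVert_inj (x : Fin p → Fin p → ℝ) (d : Fin p) {a b : ℕ} (hab : a < b) (hb : b < p) :
    primVert x d a ≠ primVert x d b := by
  obtain ⟨c, rfl⟩ : ∃ c, b = c + 1 := ⟨b - 1, by omega⟩
  intro h
  exact primVert_fresh x d hb (h ▸ primVert_mem x d (by omega : a ≤ c))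

lemma primVert_greedy (x : Fin p → Fin p → ℝ) (d : Fin p) {k : ℕ} (h : k + 1 < p)
    {v : Fin p} (hv : v ∉ primList x d k) :
    fold x (primList x d k) v ≤ fold x (primList x d k) (primVert x d (k+1)) := by
  have hne := compl_nonempty (l := primList x d k) (by rw [primList_length]; omega)
  exact (primNext_spec x d hne).2 v
    (Finset.mem_sdiff.mpr ⟨Finset.mem_univ _, fun hc => hv (List.mem_toFinset.mp hc)⟩)

end Stmt13Aux

namespace Stmt13Aux

lemma double_eq_two_tri (N : ℕ) (Y : ℕ → ℕ → ℝ) (hs : ∀ a b, Y a b = Y b a)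
    (hd : ∀ a, Y a a = 0) :
    ∑ a ∈ Finset.range N, ∑ b ∈ Finset.range N, Y a b
      = 2 * ∑ b ∈ Finset.range N, ∑ a ∈ Finset.range b, Y a b := by
  induction N with
  | zero => simp
  | succ N ih =>
    have hinner : ∀ a, ∑ b ∈ Finset.range (N+1), Y a b
        = (∑ b ∈ Finset.range N, Y a b) + Y a N := fun a => Finset.sum_range_succ _ _
    rw [Finset.sum_range_succ, Finset.sum_congr rfl (fun a _ => hinner a),
      Finset.sum_add_distrib, ih, Finset.sum_range_succ, Finset.sum_range_succ, hd]
    have : ∑ b ∈ Finset.range N, Y N b = ∑ a ∈ Finset.range N, Y a N :=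
      Finset.sum_congr rfl fun b _ => hs N b
    rw [this]
    ring

lemma two_mul_tri_sq (N : ℕ) (m : ℕ → ℝ) :
    2 * ∑ b ∈ Finset.range N, (∑ c ∈ Finset.range (b+1), m c) * m b
      = (∑ c ∈ Finset.range N, m c)^2 + ∑ c ∈ Finset.range N, (m c)^2 := by
  induction N with
  | zero => simp
  | succ N ih =>
    rw [Finset.sum_range_succ, Finset.sum_range_succ (f := m),
      Finset.sum_range_succ (f := fun c => (m c)^2), mul_add, ih]
    ring

lemma key_ineq (n W P : ℝ) (hn : 1 ≤ n) (hW0 : 0 ≤ W) (hWn : W ≤ n)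
    (hP0 : 0 ≤ P) (hPW : P ≤ W)
    (hD : n - W ≤ 1 → (n - W) * (1 - (n - W)) ≤ W - P) :
    (2*n - W) * (W^2 + P) ≤ W * (n * (n+1)) := by
  rcases le_or_gt (n - W) 1 with hg | hg
  · have h := hD hg
    nlinarith [mul_nonneg (by linarith : (0:ℝ) ≤ 2*n - W)
        (by linarith : (0:ℝ) ≤ W - P - (n-W)*(1-(n-W))),
      mul_nonneg (mul_nonneg (by linarith : (0:ℝ) ≤ n - W) (by linarith : (0:ℝ) ≤ n - W))
        (by linarith : (0:ℝ) ≤ 1 - (n-W))]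
  · nlinarith [mul_nonneg hW0 (mul_nonneg (by linarith : (0:ℝ) ≤ n - W)
        (by linarith : (0:ℝ) ≤ n - W - 1)),
      mul_nonneg (by linarith : (0:ℝ) ≤ 2*n - W) (by linarith : (0:ℝ) ≤ W - P)]

end Stmt13Aux


set_option maxHeartbeats 1000000 in
open Stmt13Aux in
/-- Maximal spanning tree lower bound: for symmetric weights `x_{ij} ∈ [0,1]` on `K_p`,
there is `τ ∈ S_p` whose greedy tree weight `S_*(τ)` is at least `2S/(1+S)`, where
`S = (1/(p(p-1))) ∑_{i≠j} x_{ij}²`. -/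
theorem stmt13 (p : ℕ) (hp : 1 ≤ p) (x : Fin p → Fin p → ℝ)
    (h0 : ∀ i j, 0 ≤ x i j) (h1 : ∀ i j, x i j ≤ 1)
    (hsym : ∀ i j, x i j = x j i) :
    let S : ℝ := (1 / ((p : ℝ) * ((p : ℝ) - 1))) *
      ∑ ij ∈ Finset.univ.filter (fun ij : Fin p × Fin p => ij.1 ≠ ij.2), (x ij.1 ij.2) ^ 2
    ∃ τ : Equiv.Perm (Fin p),
      (2 * S) / (1 + S) ≤ (1 / ((p : ℝ) - 1)) *
        ∑ i ∈ Finset.univ.filter (fun i : Fin p => (0 : ℕ) < (i : ℕ)),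
          ⨆ j : {j : Fin p // j < i}, x (τ j) (τ i) := by
  intro S
  have hSdef : S = (1 / ((p : ℝ) * ((p : ℝ) - 1))) *
      ∑ ij ∈ Finset.univ.filter (fun ij : Fin p × Fin p => ij.1 ≠ ij.2), (x ij.1 ij.2) ^ 2 := rfl
  by_cases hp1 : p = 1
  · subst hp1
    refine ⟨1, ?_⟩
    have hflt : (Finset.univ.filter (fun i : Fin 1 => (0 : ℕ) < (i : ℕ))) = ∅ := by
      ext i
      simp [Fin.val_eq_zero]
    have hSv : S = 0 := by
      rw [hSdef]
      norm_num
    rw [hSv, hflt]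
    norm_num
  · have hp2 : 2 ≤ p := by omega
    set d : Fin p := ⟨0, by omega⟩ with hd
    set f : ℕ → Fin p := primVert x d with hf
    have hinj : Function.Injective (fun i : Fin p => f i.val) := by
      intro a b hab
      rcases lt_trichotomy a.val b.val with h | h | h
      · exact absurd hab (primVert_inj x d h b.isLt)
      · exact Fin.ext h
      · exact absurd hab.symm (primVert_inj x d h a.isLt)
    set τ : Equiv.Perm (Fin p) :=
      Equiv.ofBijective _ ((Finite.injective_iff_bijective).mp hinj) with hτ
    refine ⟨τ, ?_⟩
    set M : Fin p → ℝ := fun i => ⨆ j : {j : Fin p // j < i}, x (τ j) (τ i) with hM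
    show 2 * S / (1 + S) ≤ (1 / ((p : ℝ) - 1)) *
      ∑ i ∈ Finset.univ.filter (fun i : Fin p => (0 : ℕ) < (i : ℕ)), M i
    have hτf : ∀ (k : ℕ) (h : k < p), τ ⟨k, h⟩ = f k := fun k h => rfl
    have hM0 : ∀ i : Fin p, 0 ≤ M i := fun i => Real.iSup_nonneg fun j => h0 _ _
    have hbdd : ∀ i : Fin p,
        BddAbove (Set.range fun j : {j : Fin p // j < i} => x (τ j) (τ i)) :=
      fun i => (Set.finite_range _).bddAbove
    have hM1 : ∀ i : Fin p, 0 < i.val → M i ≤ 1 := by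
      intro i hi
      haveI : Nonempty {j : Fin p // j < i} := ⟨⟨⟨0, by omega⟩, by rwa [Fin.lt_def]⟩⟩
      exact ciSup_le fun j => h1 _ _
    have hxM : ∀ (a b : ℕ), a < b → ∀ (hb : b < p), x (f a) (f b) ≤ M ⟨b, hb⟩ := by
      intro a b hab hb
      exact le_ciSup (hbdd ⟨b, hb⟩) ⟨⟨a, by omega⟩, by simp only [Fin.lt_def]; exact hab⟩
    have hGreedy : ∀ (a b : ℕ), a < b → b < p →
        ∀ (h1' : a + 1 < p), x (f a) (f b) ≤ M ⟨a + 1, h1'⟩ := by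
      intro a b hab hb hab1
      have hfb : f b ∉ primList x d a := by
        intro hmem
        obtain ⟨j, hj, hju⟩ := mem_primList x d hmem
        exact primVert_inj x d (show j < b by omega) hb hju.symm
      have e1 : x (f a) (f b) ≤ fold x (primList x d a) (f b) :=
        le_fold x (primVert_mem x d (le_refl a)) _
      have e2 : fold x (primList x d a) (f b) ≤ fold x (primList x d a) (f (a + 1)) :=
        primVert_greedy x d hab1 hfb
      have e3 : fold x (primList x d a) (f (a + 1)) ≤ M ⟨a + 1, hab1⟩ := by
        apply fold_le x (hM0 _)
        intro u hu
        obtain ⟨j, hj, rfl⟩ := mem_primList x d hu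
        exact le_ciSup (hbdd ⟨a + 1, hab1⟩)
          ⟨⟨j, by omega⟩, by simp only [Fin.lt_def]; omega⟩
      linarith
    -- the weight sequence
    set m : ℕ → ℝ := fun k => if h : k < p then M ⟨k, h⟩ else 0 with hm
    have hm0 : m 0 = 0 := by
      simp only [hm]
      rw [dif_pos (by omega : 0 < p)]
      haveI : IsEmpty {j : Fin p // j < (⟨0, by omega⟩ : Fin p)} := by
        constructor
        rintro ⟨j, hj⟩
        exact absurd hj (by simp [Fin.lt_def])
      simp only [hM]
      exact Real.iSup_of_isEmpty _
    have hmk : ∀ i ∈ Finset.range (p - 1), 0 ≤ m (i + 1) ∧ m (i + 1) ≤ 1 := by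
      intro i hi
      have hip : i + 1 < p := by have := Finset.mem_range.mp hi; omega
      simp only [hm]; rw [dif_pos hip]
      exact ⟨hM0 _, hM1 _ (by simp)⟩
    set n : ℕ := p - 1 with hn
    set nR : ℝ := (n : ℝ) with hnR
    have hn1 : (1 : ℝ) ≤ nR := by
      rw [hnR]
      exact_mod_cast (by omega : 1 ≤ n)
    have hpn : p = n + 1 := by omega
    set W : ℝ := ∑ c ∈ Finset.range p, m c with hW
    set P : ℝ := ∑ c ∈ Finset.range p, (m c) ^ 2 with hP
    have hWshift : W = ∑ i ∈ Finset.range n, m (i + 1) := by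
      rw [hW, hpn, Finset.sum_range_succ', hm0, add_zero]
    have hPshift : P = ∑ i ∈ Finset.range n, (m (i + 1)) ^ 2 := by
      rw [hP, hpn, Finset.sum_range_succ' (fun c => (m c) ^ 2), hm0]
      norm_num
    have hW0 : 0 ≤ W := by
      rw [hWshift]
      exact Finset.sum_nonneg fun i hi => (hmk i hi).1
    have hWle : W ≤ nR := by
      rw [hWshift, hnR]
      calc ∑ i ∈ Finset.range n, m (i + 1) ≤ ∑ i ∈ Finset.range n, (1 : ℝ) :=
            Finset.sum_le_sum fun i hi => (hmk i hi).2
        _ = (n : ℝ) := by simp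
    have hP0 : 0 ≤ P := by
      rw [hPshift]
      exact Finset.sum_nonneg fun i hi => sq_nonneg _
    have hPW : P ≤ W := by
      rw [hPshift, hWshift]
      refine Finset.sum_le_sum fun i hi => ?_
      obtain ⟨hh0, hh1⟩ := hmk i hi
      nlinarith
    -- the statement sum equals W
    have hWS : ∑ i ∈ Finset.univ.filter (fun i : Fin p => (0 : ℕ) < (i : ℕ)), M i = W := by
      rw [Finset.sum_filter]
      have hpt : ∀ i : Fin p, (if (0 : ℕ) < (i : ℕ) then M i else 0) = m i.val := by
        intro i
        rcases Nat.eq_zero_or_pos i.val with h | h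
        · rw [if_neg (by omega), h, hm0]
        · rw [if_pos h]; simp only [hm]; rw [dif_pos i.isLt]
      rw [Finset.sum_congr rfl fun i _ => hpt i, hW]
      exact Fin.sum_univ_eq_sum_range m p
    -- the square sum
    set Y : ℕ → ℕ → ℝ := fun a b => if a ≠ b then (x (f a) (f b)) ^ 2 else 0 with hY
    set QS : ℝ := ∑ ij ∈ Finset.univ.filter (fun ij : Fin p × Fin p => ij.1 ≠ ij.2),
      (x ij.1 ij.2) ^ 2 with hQS
    have hQY : QS = ∑ a ∈ Finset.range p, ∑ b ∈ Finset.range p, Y a b := by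
      rw [hQS, Finset.sum_filter]
      rw [← Equiv.sum_comp (Equiv.prodCongr τ τ)
        (fun ij : Fin p × Fin p => if ij.1 ≠ ij.2 then (x ij.1 ij.2) ^ 2 else 0)]
      have hpt : ∀ ab : Fin p × Fin p,
          (fun ij : Fin p × Fin p => if ij.1 ≠ ij.2 then (x ij.1 ij.2) ^ 2 else 0)
            ((Equiv.prodCongr τ τ) ab) = Y ab.1.val ab.2.val := by
        rintro ⟨a, b⟩
        simp only [Equiv.prodCongr_apply, Prod.map]
        simp only [hY]
        by_cases h : a = b
        · subst h
          simp
        · have h1' : τ a ≠ τ b := fun hc => h (τ.injective hc)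
          have h2' : a.val ≠ b.val := fun hc => h (Fin.ext hc)
          rw [if_pos h1', if_pos h2']
          rfl
      rw [Finset.sum_congr rfl fun ab _ => hpt ab]
      rw [Fintype.sum_prod_type]
      have hinner : ∀ a : Fin p, ∑ b : Fin p, Y a.val b.val
          = ∑ b ∈ Finset.range p, Y a.val b := fun a =>
        Fin.sum_univ_eq_sum_range (fun k => Y a.val k) p
      rw [Finset.sum_congr rfl fun a _ => hinner a]
      exact Fin.sum_univ_eq_sum_range (fun k => ∑ b ∈ Finset.range p, Y k b) p
    have hYs : ∀ a b, Y a b = Y b a := by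
      intro a b
      simp only [hY]
      by_cases h : a = b
      · subst h; rfl
      · rw [if_pos h, if_pos (Ne.symm h), hsym]
    have hYd : ∀ a, Y a a = 0 := by intro a; simp only [hY]; simp
    have hQ2 : QS = 2 * ∑ b ∈ Finset.range p, ∑ a ∈ Finset.range b, Y a b := by
      rw [hQY]
      exact double_eq_two_tri p Y hYs hYd
    have htri : ∑ b ∈ Finset.range p, ∑ a ∈ Finset.range b, Y a b
        ≤ ∑ b ∈ Finset.range p, (∑ c ∈ Finset.range (b + 1), m c) * m b := by
      refine Finset.sum_le_sum fun b hb => ?_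
      have hbp : b < p := Finset.mem_range.mp hb
      have step : ∑ a ∈ Finset.range b, Y a b ≤ ∑ a ∈ Finset.range b, m (a + 1) * m b := by
        refine Finset.sum_le_sum fun a ha => ?_
        have hab : a < b := Finset.mem_range.mp ha
        have hap : a + 1 < p := by omega
        have hYv : Y a b = (x (f a) (f b)) ^ 2 := by simp only [hY]; rw [if_pos (by omega : a ≠ b)]
        have e1 : x (f a) (f b) ≤ m (a + 1) := by
          simp only [hm]; rw [dif_pos hap]
          exact hGreedy a b hab hbp hap
        have e2 : x (f a) (f b) ≤ m b := by
          simp only [hm]; rw [dif_pos hbp]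
          exact hxM a b hab hbp
        have e0 : 0 ≤ x (f a) (f b) := h0 _ _
        rw [hYv, sq]
        exact mul_le_mul e1 e2 e0 (le_trans e0 e1)
      calc ∑ a ∈ Finset.range b, Y a b ≤ ∑ a ∈ Finset.range b, m (a + 1) * m b := step
        _ = (∑ c ∈ Finset.range (b + 1), m c) * m b := by
            rw [← Finset.sum_mul, Finset.sum_range_succ', hm0, add_zero]
    have hQb : QS ≤ W ^ 2 + P := by
      rw [hQ2, hW, hP, ← two_mul_tri_sq p m]
      linarith [htri]
    -- lower bound for W - P when n - W small
    have hD : nR - W ≤ 1 → (nR - W) * (1 - (nR - W)) ≤ W - P := by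
      intro hg
      have hsub : ∑ i ∈ Finset.range n, (1 - m (i + 1)) = nR - W := by
        rw [Finset.sum_sub_distrib, Finset.sum_const, Finset.card_range, nsmul_eq_mul,
          mul_one, ← hWshift, hnR]
      have hterm : ∀ i ∈ Finset.range n, 1 - m (i + 1) ≤ nR - W := by
        intro i hi
        rw [← hsub]
        exact Finset.single_le_sum (f := fun j => 1 - m (j + 1))
          (fun j hj => by
            show (0:ℝ) ≤ 1 - m (j + 1)
            linarith [(hmk j hj).2]) hi
      have hWP : W - P = ∑ i ∈ Finset.range n, (m (i + 1) - (m (i + 1)) ^ 2) := by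
        rw [Finset.sum_sub_distrib, ← hWshift, ← hPshift]
      rw [hWP]
      have hle : ∀ i ∈ Finset.range n,
          (1 - (nR - W)) * (1 - m (i + 1)) ≤ m (i + 1) - (m (i + 1)) ^ 2 := by
        intro i hi
        nlinarith [hterm i hi, (hmk i hi).1, (hmk i hi).2]
      calc (nR - W) * (1 - (nR - W))
          = ∑ i ∈ Finset.range n, (1 - (nR - W)) * (1 - m (i + 1)) := by
            rw [← Finset.mul_sum, hsub]; ring
        _ ≤ _ := Finset.sum_le_sum hle
    have key := key_ineq nR W P hn1 hW0 hWle hP0 hPW hD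
    -- final arithmetic
    have hQS0 : 0 ≤ QS := by
      rw [hQS]
      exact Finset.sum_nonneg fun ij _ => sq_nonneg _
    have hpR : (p : ℝ) = nR + 1 := by
      rw [hnR, hpn]
      push_cast
      ring
    have hnR0 : (0 : ℝ) < nR := by linarith
    have hSv : S = QS / ((nR + 1) * nR) := by
      rw [hSdef, hpR]
      rw [show (nR + 1) - 1 = nR from by ring]
      rw [one_div, inv_mul_eq_div]
    have hS0 : 0 ≤ S := by
      rw [hSv]
      positivity
    have h1S : (0 : ℝ) < 1 + S := by linarith
    rw [hWS, hpR, show (nR + 1) - 1 = nR from by ring]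
    rw [div_le_iff₀ h1S, ← sub_nonneg]
    have hnum : 2 * nR * QS - W * QS ≤ W * (nR * (nR + 1)) := by
      have h2nW : (0 : ℝ) ≤ 2 * nR - W := by linarith
      have := mul_le_mul_of_nonneg_left hQb h2nW
      nlinarith
    have hexp : 1 / nR * W * (1 + S) - 2 * S
        = (W * (nR * (nR + 1)) + W * QS - 2 * nR * QS) / (nR * nR * (nR + 1)) := by
      rw [hSv]
      field_simp
    rw [hexp]
    apply div_nonneg (by linarith) (by positivity)
end

section
/- Let 0 ≤ x ≤ 1, let p ≥ 2, let k_1, k_2 ≥ 1 with k_1 + k_2 = p, and define α_1 = (k_1-1)/(p-1), α_2 = (k_2-1)/(p-1), α_3 = 1/(p-1), β_1 = k_1(k_1-1)/(p(p-1)), β_2 = k_2(k_2-1)/(p(p-1)), β_3 = 2k_1k_2/(p(p-1)). Then for all S_1, S_2 with x² ≤ S_1, S_2 ≤ 1: α_1·(2S_1/(1+S_1)) + α_2·(2S_2/(1+S_2)) + α_3·x ≥ 2(β_1S_1 + β_2S_2 + β_3x²)/(1 + β_1S_1 + β_2S_2 + β_3x²). -/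
private lemma keyHalf (K₁ K₂ a₁ a₂ a₃ : ℝ) (hK₁ : 1 ≤ K₁) (hK₂ : 1 ≤ K₂)
    (ha₃ : 1 ≤ a₃) (h31 : a₃ ≤ a₁) (h32 : a₃ ≤ a₂) (ha₁ : a₁ ≤ 2) (ha₂ : a₂ ≤ 2)
    (h12 : a₂ ≤ a₁) :
    (K₁-1)*(K₂-1)*a₃*(a₁-a₂)*(K₁*a₁-K₂*a₂)
      ≤ K₁*(K₁-1)*a₂*(a₁-a₃)*(2*K₂*a₃-a₁) + K₂*(K₂-1)*a₁*(a₂-a₃)*(2*K₁*a₃-a₂) := by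
  have hK₁0 : (0:ℝ) < K₁ := by linarith
  have hK₂0 : (0:ℝ) < K₂ := by linarith
  have hm : (0:ℝ) ≤ K₁ - 1 := by linarith
  have hn : (0:ℝ) ≤ K₂ - 1 := by linarith
  have ht2 : (0:ℝ) ≤ K₂*(K₂-1)*a₁*(a₂-a₃)*(2*K₁*a₃-a₂) := by
    have : (0:ℝ) ≤ 2*K₁*a₃-a₂ := by nlinarith
    have h' : (0:ℝ) ≤ a₂ - a₃ := by linarith
    have h'' : (0:ℝ) ≤ a₁ := by linarith
    positivity
  rcases le_total (K₁*a₁) (K₂*a₂) with hc | hc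
  · -- LHS ≤ 0 ≤ RHS
    have hL : (K₁-1)*(K₂-1)*a₃*(a₁-a₂)*(K₁*a₁-K₂*a₂) ≤ 0 := by
      have h1 : (0:ℝ) ≤ (K₁-1)*(K₂-1)*a₃*(a₁-a₂) := by
        have : (0:ℝ) ≤ a₁ - a₂ := by linarith
        have h3 : (0:ℝ) ≤ a₃ := by linarith
        positivity
      have h2 : K₁*a₁-K₂*a₂ ≤ 0 := by linarith
      exact mul_nonpos_of_nonneg_of_nonpos h1 h2
    have ht1 : (0:ℝ) ≤ K₁*(K₁-1)*a₂*(a₁-a₃)*(2*K₂*a₃-a₁) := by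
      have : (0:ℝ) ≤ 2*K₂*a₃-a₁ := by nlinarith
      have h' : (0:ℝ) ≤ a₁ - a₃ := by linarith
      have h'' : (0:ℝ) ≤ a₂ := by linarith
      positivity
    linarith
  · -- hard case
    have e1 : a₃*(a₁-a₂) ≤ a₂*(a₁-a₃) := by nlinarith
    have e2 : (K₂-1)*(K₁*a₁-K₂*a₂) ≤ K₁*(2*K₂*a₃-a₁) := by
      nlinarith [mul_nonneg (mul_pos hK₁0 hK₂0).le (by linarith : (0:ℝ) ≤ 2*a₃ - a₁),
        mul_nonneg (mul_nonneg hn hK₂0.le) (by linarith : (0:ℝ) ≤ a₂)]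
    have e3 : (0:ℝ) ≤ a₃*(a₁-a₂) := by
      have : (0:ℝ) ≤ a₁ - a₂ := by linarith
      have h3 : (0:ℝ) ≤ a₃ := by linarith
      positivity
    have e4 : (0:ℝ) ≤ (K₂-1)*(K₁*a₁-K₂*a₂) := mul_nonneg hn (by linarith)
    have chain : (K₂-1)*(K₁*a₁-K₂*a₂) * (a₃*(a₁-a₂)) ≤ K₁*(2*K₂*a₃-a₁) * (a₂*(a₁-a₃)) :=
      mul_le_mul e2 e1 e3 (le_trans e4 e2)
    nlinarith [mul_nonneg hm (sub_nonneg.2 chain), ht2]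

private lemma keyG (K₁ K₂ a₁ a₂ a₃ : ℝ) (hK₁ : 1 ≤ K₁) (hK₂ : 1 ≤ K₂)
    (ha₃ : 1 ≤ a₃) (h31 : a₃ ≤ a₁) (h32 : a₃ ≤ a₂) (ha₁ : a₁ ≤ 2) (ha₂ : a₂ ≤ 2) :
    (K₁-1)*(K₂-1)*a₃*(a₁-a₂)*(K₁*a₁-K₂*a₂)
      ≤ K₁*(K₁-1)*a₂*(a₁-a₃)*(2*K₂*a₃-a₁) + K₂*(K₂-1)*a₁*(a₂-a₃)*(2*K₁*a₃-a₂) := by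
  rcases le_total a₂ a₁ with h | h
  · exact keyHalf K₁ K₂ a₁ a₂ a₃ hK₁ hK₂ ha₃ h31 h32 ha₁ ha₂ h
  · have := keyHalf K₂ K₁ a₂ a₁ a₃ hK₂ hK₁ ha₃ h32 h31 ha₂ ha₁ h
    nlinarith [this]

private lemma keyPoly (K₁ K₂ a₁ a₂ a₃ : ℝ) (hK₁ : 1 ≤ K₁) (hK₂ : 1 ≤ K₂)
    (ha₃ : 1 ≤ a₃) (h31 : a₃ ≤ a₁) (h32 : a₃ ≤ a₂) (ha₁ : a₁ ≤ 2) (ha₂ : a₂ ≤ 2) :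
    ((K₁-1)*a₂*a₃ + (K₂-1)*a₁*a₃ + a₁*a₂) * (K₁*(K₁-1)*a₁ + K₂*(K₂-1)*a₂ + 2*K₁*K₂*a₃)
      ≤ (K₁+K₂) * ((K₁+K₂)-1)^2 * (a₁*a₂*a₃) := by
  nlinarith [keyG K₁ K₂ a₁ a₂ a₃ hK₁ hK₂ ha₃ h31 h32 ha₁ ha₂]

set_option maxHeartbeats 1000000 in
private lemma mainReal (K₁ K₂ x S₁ S₂ : ℝ) (hK₁ : 1 ≤ K₁) (hK₂ : 1 ≤ K₂)
    (hx0 : 0 ≤ x) (hx1 : x ≤ 1)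
    (hS₁l : x ^ 2 ≤ S₁) (hS₁u : S₁ ≤ 1) (hS₂l : x ^ 2 ≤ S₂) (hS₂u : S₂ ≤ 1) :
    2 * ((K₁*(K₁-1)/((K₁+K₂)*((K₁+K₂)-1))) * S₁ + (K₂*(K₂-1)/((K₁+K₂)*((K₁+K₂)-1))) * S₂
        + (2*K₁*K₂/((K₁+K₂)*((K₁+K₂)-1))) * x ^ 2) /
      (1 + (K₁*(K₁-1)/((K₁+K₂)*((K₁+K₂)-1))) * S₁ + (K₂*(K₂-1)/((K₁+K₂)*((K₁+K₂)-1))) * S₂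
        + (2*K₁*K₂/((K₁+K₂)*((K₁+K₂)-1))) * x ^ 2)
      ≤ ((K₁-1)/((K₁+K₂)-1)) * (2 * S₁ / (1 + S₁)) + ((K₂-1)/((K₁+K₂)-1)) * (2 * S₂ / (1 + S₂))
        + (1/((K₁+K₂)-1)) * x := by
  have hP1 : (0:ℝ) < (K₁+K₂) - 1 := by linarith
  have hP0 : (0:ℝ) < K₁+K₂ := by linarith
  have hx2 : (0:ℝ) ≤ x^2 := sq_nonneg x
  have hx2le : x^2 ≤ 1 := by nlinarith
  have ha₁0 : (0:ℝ) < 1 + S₁ := by nlinarith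
  have ha₂0 : (0:ℝ) < 1 + S₂ := by nlinarith
  have ha₃0 : (0:ℝ) < 1 + x^2 := by nlinarith
  have ha₃1 : (1:ℝ) ≤ 1 + x^2 := by nlinarith
  have h31 : 1 + x^2 ≤ 1 + S₁ := by linarith
  have h32 : 1 + x^2 ≤ 1 + S₂ := by linarith
  have hub1 : 1 + S₁ ≤ 2 := by linarith
  have hub2 : 1 + S₂ ≤ 2 := by linarith
  have hm : (0:ℝ) ≤ K₁ - 1 := by linarith
  have hn : (0:ℝ) ≤ K₂ - 1 := by linarith
  have hK₁0 : (0:ℝ) < K₁ := by linarith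
  have hK₂0 : (0:ℝ) < K₂ := by linarith
  have hNβ0 : (0:ℝ) < K₁*(K₁-1)*(1+S₁) + K₂*(K₂-1)*(1+S₂) + 2*K₁*K₂*(1+x^2) := by
    have h1 : (0:ℝ) ≤ K₁*(K₁-1)*(1+S₁) := by positivity
    have h2 : (0:ℝ) ≤ K₂*(K₂-1)*(1+S₂) := by positivity
    have h3 : (0:ℝ) < 2*K₁*K₂*(1+x^2) := by positivity
    linarith
  have hkey := keyPoly K₁ K₂ (1+S₁) (1+S₂) (1+x^2) hK₁ hK₂ ha₃1 h31 h32 hub1 hub2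
  -- rewrite LHS as 2 - 2/(1+T)
  have hT : 1 + (K₁*(K₁-1)/((K₁+K₂)*((K₁+K₂)-1))) * S₁ + (K₂*(K₂-1)/((K₁+K₂)*((K₁+K₂)-1))) * S₂
        + (2*K₁*K₂/((K₁+K₂)*((K₁+K₂)-1))) * x ^ 2
      = (K₁*(K₁-1)*(1+S₁) + K₂*(K₂-1)*(1+S₂) + 2*K₁*K₂*(1+x^2)) / ((K₁+K₂)*((K₁+K₂)-1)) := by
    field_simp
    ring
  have hT0 : (0:ℝ) < 1 + (K₁*(K₁-1)/((K₁+K₂)*((K₁+K₂)-1))) * S₁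
      + (K₂*(K₂-1)/((K₁+K₂)*((K₁+K₂)-1))) * S₂ + (2*K₁*K₂/((K₁+K₂)*((K₁+K₂)-1))) * x ^ 2 := by
    rw [hT]; positivity
  have hR : ((K₁-1)/((K₁+K₂)-1)) * (2 * S₁ / (1 + S₁)) + ((K₂-1)/((K₁+K₂)-1)) * (2 * S₂ / (1 + S₂))
        + (1/((K₁+K₂)-1)) * x
      = 2 - (2*(((K₁-1)/((K₁+K₂)-1))/(1+S₁) + ((K₂-1)/((K₁+K₂)-1))/(1+S₂))
          + (1/((K₁+K₂)-1))*(2-x)) := by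
    field_simp
    ring
  have hL : 2 * ((K₁*(K₁-1)/((K₁+K₂)*((K₁+K₂)-1))) * S₁ + (K₂*(K₂-1)/((K₁+K₂)*((K₁+K₂)-1))) * S₂
        + (2*K₁*K₂/((K₁+K₂)*((K₁+K₂)-1))) * x ^ 2) /
      (1 + (K₁*(K₁-1)/((K₁+K₂)*((K₁+K₂)-1))) * S₁ + (K₂*(K₂-1)/((K₁+K₂)*((K₁+K₂)-1))) * S₂
        + (2*K₁*K₂/((K₁+K₂)*((K₁+K₂)-1))) * x ^ 2)
      = 2 - 2 / (1 + (K₁*(K₁-1)/((K₁+K₂)*((K₁+K₂)-1))) * S₁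
        + (K₂*(K₂-1)/((K₁+K₂)*((K₁+K₂)-1))) * S₂ + (2*K₁*K₂/((K₁+K₂)*((K₁+K₂)-1))) * x ^ 2) := by
    rw [eq_sub_iff_add_eq, div_add_div _ _ (ne_of_gt hT0) (ne_of_gt hT0), div_eq_iff (by positivity)]
    ring
  rw [hL, hR]
  have hα₃0 : (0:ℝ) ≤ 1/((K₁+K₂)-1) := by positivity
  have hstep1 : (1/((K₁+K₂)-1))*(2-x) ≤ 2*((1/((K₁+K₂)-1))/(1+x^2)) := by
    have hxfact : (2-x) ≤ 2/(1+x^2) := by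
      rw [le_div_iff₀ ha₃0]
      nlinarith [mul_nonneg hx0 (sq_nonneg (1-x))]
    calc (1/((K₁+K₂)-1))*(2-x) ≤ (1/((K₁+K₂)-1))*(2/(1+x^2)) :=
          mul_le_mul_of_nonneg_left hxfact hα₃0
      _ = 2*((1/((K₁+K₂)-1))/(1+x^2)) := by ring
  have hsum3 : ((K₁-1)/((K₁+K₂)-1))/(1+S₁) + ((K₂-1)/((K₁+K₂)-1))/(1+S₂)
        + (1/((K₁+K₂)-1))/(1+x^2)
      = ((K₁-1)*(1+S₂)*(1+x^2) + (K₂-1)*(1+S₁)*(1+x^2) + (1+S₁)*(1+S₂))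
        / ((1+S₁)*(1+S₂)*(1+x^2)*((K₁+K₂)-1)) := by
    field_simp
  have hstep2 : ((K₁-1)/((K₁+K₂)-1))/(1+S₁) + ((K₂-1)/((K₁+K₂)-1))/(1+S₂)
        + (1/((K₁+K₂)-1))/(1+x^2)
      ≤ 1 / (1 + (K₁*(K₁-1)/((K₁+K₂)*((K₁+K₂)-1))) * S₁
        + (K₂*(K₂-1)/((K₁+K₂)*((K₁+K₂)-1))) * S₂ + (2*K₁*K₂/((K₁+K₂)*((K₁+K₂)-1))) * x ^ 2) := by
    rw [hsum3, hT, one_div, inv_div, div_le_div_iff₀ (by positivity) hNβ0]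
    nlinarith [hkey]
  have h2s := mul_le_mul_of_nonneg_left hstep2 (by norm_num : (0:ℝ) ≤ 2)
  rw [mul_one_div] at h2s
  linarith

/-- Inductive-step inequality for the spanning tree bound: with
`α_i`, `β_i` defined from `k₁ + k₂ = p` and `0 ≤ x ≤ 1`, for all
`S₁, S₂ ∈ [x², 1]`,
`α₁·2S₁/(1+S₁) + α₂·2S₂/(1+S₂) + α₃·x ≥ 2(β₁S₁+β₂S₂+β₃x²)/(1+β₁S₁+β₂S₂+β₃x²)`. -/
theorem stmt14 (p k₁ k₂ : ℕ) (hp : 2 ≤ p) (hk₁ : 1 ≤ k₁) (hk₂ : 1 ≤ k₂)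
    (hsum : k₁ + k₂ = p) (x : ℝ) (hx0 : 0 ≤ x) (hx1 : x ≤ 1)
    (S₁ S₂ : ℝ) (hS₁l : x ^ 2 ≤ S₁) (hS₁u : S₁ ≤ 1) (hS₂l : x ^ 2 ≤ S₂) (hS₂u : S₂ ≤ 1) :
    let α₁ : ℝ := ((k₁ : ℝ) - 1) / ((p : ℝ) - 1)
    let α₂ : ℝ := ((k₂ : ℝ) - 1) / ((p : ℝ) - 1)
    let α₃ : ℝ := 1 / ((p : ℝ) - 1)
    let β₁ : ℝ := (k₁ : ℝ) * ((k₁ : ℝ) - 1) / ((p : ℝ) * ((p : ℝ) - 1))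
    let β₂ : ℝ := (k₂ : ℝ) * ((k₂ : ℝ) - 1) / ((p : ℝ) * ((p : ℝ) - 1))
    let β₃ : ℝ := 2 * (k₁ : ℝ) * (k₂ : ℝ) / ((p : ℝ) * ((p : ℝ) - 1))
    2 * (β₁ * S₁ + β₂ * S₂ + β₃ * x ^ 2) / (1 + β₁ * S₁ + β₂ * S₂ + β₃ * x ^ 2)
      ≤ α₁ * (2 * S₁ / (1 + S₁)) + α₂ * (2 * S₂ / (1 + S₂)) + α₃ * x := by
  intro α₁ α₂ α₃ β₁ β₂ β₃
  have hK₁ : (1:ℝ) ≤ (k₁:ℝ) := by exact_mod_cast hk₁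
  have hK₂ : (1:ℝ) ≤ (k₂:ℝ) := by exact_mod_cast hk₂
  have hps : ((p:ℝ)) = (k₁:ℝ) + (k₂:ℝ) := by exact_mod_cast hsum.symm
  have := mainReal (k₁:ℝ) (k₂:ℝ) x S₁ S₂ hK₁ hK₂ hx0 hx1 hS₁l hS₁u hS₂l hS₂u
  simp only [α₁, α₂, α₃, β₁, β₂, β₃, hps]
  convert this using 3 <;> ring
end

section
/- With the notation of the previous context (α_i, β_i defined from k_1, k_2, p, and 0 ≤ x ≤ 1), the function f(S_1,S_2) = (2α_1S_1(1+S_2) + 2α_2S_2(1+S_1) + α_3x(1+S_1)(1+S_2))(1 + β_1S_1 + β_2S_2 + β_3x²) − 2(β_1S_1 + β_2S_2 + β_3x²)(1+S_1)(1+S_2) is concave in S_1 and in S_2 separately (∂²f/∂S_i² ≤ 0 for S_1, S_2 ∈ [x²,1]), and satisfies f(x²,x²) = (1+x²)²·α_3·x·(1−x)² ≥ 0. -/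
set_option maxHeartbeats 1000000

lemma quad_dd (a b c t : ℝ) :
    deriv (deriv fun s : ℝ => a * s ^ 2 + b * s + c) t = 2 * a := by
  have h1 : (deriv fun s : ℝ => a * s ^ 2 + b * s + c) = fun s => 2 * a * s + b := by
    funext y
    have h : HasDerivAt (fun s : ℝ => a * s ^ 2 + b * s + c) (2 * a * y + b) y := by
      have h1 := (hasDerivAt_pow 2 y).const_mul a
      have h2 := ((hasDerivAt_id y).const_mul b).add_const c
      have h3 := h1.add h2
      convert h3 using 1
      · rfl
      · rfl
      · ext s; simp [id]; ring
      · simp; ring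
    exact h.deriv
  rw [h1]
  have h : HasDerivAt (fun s : ℝ => 2 * a * s + b) (2 * a) t := by
    have := ((hasDerivAt_id t).const_mul (2 * a)).add_const b
    simpa using this
  exact h.deriv

/-- Properties of the auxiliary function `f(S₁,S₂)` in the spanning tree bound:
it is concave in each variable separately on `[x²,1]` (nonpositive second partial
derivatives), and `f(x²,x²) = (1+x²)²·α₃·x·(1−x)² ≥ 0`. -/
theorem stmt15 (p k₁ k₂ : ℕ) (hp : 2 ≤ p) (hk₁ : 1 ≤ k₁) (hk₂ : 1 ≤ k₂)
    (hsum : k₁ + k₂ = p) (x : ℝ) (hx0 : 0 ≤ x) (hx1 : x ≤ 1) :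
    let α₁ : ℝ := ((k₁ : ℝ) - 1) / ((p : ℝ) - 1)
    let α₂ : ℝ := ((k₂ : ℝ) - 1) / ((p : ℝ) - 1)
    let α₃ : ℝ := 1 / ((p : ℝ) - 1)
    let β₁ : ℝ := (k₁ : ℝ) * ((k₁ : ℝ) - 1) / ((p : ℝ) * ((p : ℝ) - 1))
    let β₂ : ℝ := (k₂ : ℝ) * ((k₂ : ℝ) - 1) / ((p : ℝ) * ((p : ℝ) - 1))
    let β₃ : ℝ := 2 * (k₁ : ℝ) * (k₂ : ℝ) / ((p : ℝ) * ((p : ℝ) - 1))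
    let f : ℝ → ℝ → ℝ := fun S₁ S₂ =>
      (2 * α₁ * S₁ * (1 + S₂) + 2 * α₂ * S₂ * (1 + S₁) + α₃ * x * (1 + S₁) * (1 + S₂)) *
          (1 + β₁ * S₁ + β₂ * S₂ + β₃ * x ^ 2)
        - 2 * (β₁ * S₁ + β₂ * S₂ + β₃ * x ^ 2) * (1 + S₁) * (1 + S₂)
    (∀ S₁ S₂ : ℝ, x ^ 2 ≤ S₁ → S₁ ≤ 1 → x ^ 2 ≤ S₂ → S₂ ≤ 1 →
        deriv (deriv (fun s => f s S₂)) S₁ ≤ 0 ∧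
        deriv (deriv (fun s => f S₁ s)) S₂ ≤ 0) ∧
    f (x ^ 2) (x ^ 2) = (1 + x ^ 2) ^ 2 * α₃ * x * (1 - x) ^ 2 ∧
    0 ≤ f (x ^ 2) (x ^ 2) := by
  intro α₁ α₂ α₃ β₁ β₂ β₃ f
  have hp2 : (2:ℝ) ≤ (p:ℝ) := by exact_mod_cast hp
  have hp1 : (0:ℝ) < (p:ℝ) - 1 := by linarith
  have hp0 : (0:ℝ) < (p:ℝ) := by linarith
  have hk1 : (1:ℝ) ≤ (k₁:ℝ) := by exact_mod_cast hk₁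
  have hk2 : (1:ℝ) ≤ (k₂:ℝ) := by exact_mod_cast hk₂
  have hks : (k₁:ℝ) + (k₂:ℝ) = (p:ℝ) := by exact_mod_cast hsum
  have hk2p : (k₂:ℝ) = (p:ℝ) - (k₁:ℝ) := by linarith
  have hk1p : (k₁:ℝ) = (p:ℝ) - (k₂:ℝ) := by linarith
  have hp1' : ((p:ℝ) - 1) ≠ 0 := ne_of_gt hp1
  have hp0' : (p:ℝ) ≠ 0 := ne_of_gt hp0
  have hfeq : f (x ^ 2) (x ^ 2) = (1 + x ^ 2) ^ 2 * α₃ * x * (1 - x) ^ 2 := by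
    simp only [f, α₁, α₂, α₃, β₁, β₂, β₃]
    rw [hk2p]
    field_simp
    ring
  refine ⟨?_, hfeq, ?_⟩
  · intro S₁ S₂ h1 h2 h3 h4
    have hS1 : 0 ≤ S₁ := le_trans (by positivity) h1
    have hS2 : 0 ≤ S₂ := le_trans (by positivity) h3
    constructor
    · set DD : ℝ := (p:ℝ) * ((p:ℝ) - 1) ^ 2 with hDD
      have hD : DD ≠ 0 := by positivity
      set A : ℝ := ((k₁:ℝ) * ((k₁:ℝ) - 1) * ((x - 2 * ((p:ℝ) - (k₁:ℝ))) + S₂ * (x - 2))) / DD with hA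
      set B : ℝ := ((2 : ℝ) * (p:ℝ) + (-2 : ℝ) * (p:ℝ) ^ 2 + (-2 : ℝ) * (k₁:ℝ) + (2 : ℝ) * (k₁:ℝ) * (p:ℝ) ^ 2 + (2 : ℝ) * (k₁:ℝ) ^ 2 + (-2 : ℝ) * (k₁:ℝ) ^ 2 * (p:ℝ) + (-1 : ℝ) * x * (p:ℝ) + (1 : ℝ) * x * (p:ℝ) ^ 2 + (-1 : ℝ) * x * (k₁:ℝ) + (1 : ℝ) * x * (k₁:ℝ) ^ 2 + (-4 : ℝ) * x ^ 2 * (k₁:ℝ) * (p:ℝ) ^ 2 + (8 : ℝ) * x ^ 2 * (k₁:ℝ) ^ 2 * (p:ℝ) + (-4 : ℝ) * x ^ 2 * (k₁:ℝ) ^ 3 + (2 : ℝ) * x ^ 3 * (k₁:ℝ) * (p:ℝ) + (-2 : ℝ) * x ^ 3 * (k₁:ℝ) ^ 2 + (4 : ℝ) * S₂ * (p:ℝ) + (-4 : ℝ) * S₂ * (p:ℝ) ^ 2 + (-4 : ℝ) * S₂ * (k₁:ℝ) * (p:ℝ) + (6 : ℝ) * S₂ * (k₁:ℝ) * (p:ℝ)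 ^ 2 + (4 : ℝ) * S₂ * (k₁:ℝ) ^ 2 + (-6 : ℝ) * S₂ * (k₁:ℝ) ^ 2 * (p:ℝ) + (-2 : ℝ) * S₂ * x * (p:ℝ) + (2 : ℝ) * S₂ * x * (p:ℝ) ^ 2 + (-2 : ℝ) * S₂ * x * (k₁:ℝ) * (p:ℝ) + (2 : ℝ) * S₂ * x * (k₁:ℝ) ^ 2 + (-4 : ℝ) * S₂ * x ^ 2 * (k₁:ℝ) * (p:ℝ) + (4 : ℝ) * S₂ * x ^ 2 * (k₁:ℝ) ^ 2 + (2 : ℝ) * S₂ * x ^ 3 * (k₁:ℝ) * (p:ℝ) + (-2 : ℝ) * S₂ * x ^ 3 * (k₁:ℝ) ^ 2 + (2 : ℝ) * S₂ ^ 2 * (p:ℝ) + (-2 : ℝ) * S₂ ^ 2 * (p:ℝ) ^ 2 + (-2 : ℝ) * S₂ ^ 2 * (k₁:ℝ) + (4 : ℝ) * S₂ ^ 2 * (k₁:ℝ) * (p:ℝ) + (-2 : ℝ) * S₂ ^ 2 * (k₁:ℝ) ^ 2 + (-1 : ℝ) * S₂ ^ 2 * x * (p:ℝ) + (1 : ℝ)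 * S₂ ^ 2 * x * (p:ℝ) ^ 2 + (1 : ℝ) * S₂ ^ 2 * x * (k₁:ℝ) + (-2 : ℝ) * S₂ ^ 2 * x * (k₁:ℝ) * (p:ℝ) + (1 : ℝ) * S₂ ^ 2 * x * (k₁:ℝ) ^ 2) / DD with hB
      set C : ℝ := ((-1 : ℝ) * x * (p:ℝ) + (1 : ℝ) * x * (p:ℝ) ^ 2 + (4 : ℝ) * x ^ 2 * (k₁:ℝ) * (p:ℝ) + (-4 : ℝ) * x ^ 2 * (k₁:ℝ) * (p:ℝ) ^ 2 + (-4 : ℝ) * x ^ 2 * (k₁:ℝ) ^ 2 + (4 : ℝ) * x ^ 2 * (k₁:ℝ) ^ 2 * (p:ℝ) + (2 : ℝ) * x ^ 3 * (k₁:ℝ) * (p:ℝ) + (-2 : ℝ) * x ^ 3 * (k₁:ℝ) ^ 2 + (2 : ℝ) * S₂ * (k₁:ℝ) + (-4 : ℝ) * S₂ * (k₁:ℝ) * (p:ℝ) + (2 : ℝ) * S₂ * (k₁:ℝ) * (p:ℝ) ^ 2 + (2 : ℝ) * S₂ * (k₁:ℝ) ^ 2 + (-2 : ℝ) * S₂ *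 (k₁:ℝ) ^ 2 * (p:ℝ) + (-2 : ℝ) * S₂ * x * (p:ℝ) + (2 : ℝ) * S₂ * x * (p:ℝ) ^ 2 + (1 : ℝ) * S₂ * x * (k₁:ℝ) + (-2 : ℝ) * S₂ * x * (k₁:ℝ) * (p:ℝ) + (1 : ℝ) * S₂ * x * (k₁:ℝ) ^ 2 + (-4 : ℝ) * S₂ * x ^ 2 * (k₁:ℝ) ^ 2 * (p:ℝ) + (4 : ℝ) * S₂ * x ^ 2 * (k₁:ℝ) ^ 3 + (2 : ℝ) * S₂ * x ^ 3 * (k₁:ℝ) * (p:ℝ) + (-2 : ℝ) * S₂ * x ^ 3 * (k₁:ℝ) ^ 2 + (2 : ℝ) * S₂ ^ 2 * (k₁:ℝ) * (p:ℝ) + (-2 : ℝ) * S₂ ^ 2 * (k₁:ℝ) * (p:ℝ) ^ 2 + (-2 : ℝ) * S₂ ^ 2 * (k₁:ℝ) ^ 2 + (4 : ℝ) * S₂ ^ 2 * (k₁:ℝ) ^ 2 * (p:ℝ) + (-2 : ℝ) * S₂ ^ 2 * (k₁:ℝ) ^ 3 + (-1 : ℝ) * S₂ ^ 2 * x * (p:ℝ)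 + (1 : ℝ) * S₂ ^ 2 * x * (p:ℝ) ^ 2 + (1 : ℝ) * S₂ ^ 2 * x * (k₁:ℝ) + (-2 : ℝ) * S₂ ^ 2 * x * (k₁:ℝ) * (p:ℝ) + (1 : ℝ) * S₂ ^ 2 * x * (k₁:ℝ) ^ 2) / DD with hC
      have hfe : (fun s => f s S₂) =
          fun s => A * s ^ 2 + B * s + C := by
        funext s
        simp only [f, α₁, α₂, α₃, β₁, β₂, β₃, hA, hB, hC, hDD]
        rw [hk2p]
        field_simp
        ring
      rw [hfe, quad_dd]
      have hnum : (k₁:ℝ) * ((k₁:ℝ) - 1) * ((x - 2 * ((p:ℝ) - (k₁:ℝ))) + S₂ * (x - 2)) ≤ 0 := by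
        apply mul_nonpos_of_nonneg_of_nonpos
        · nlinarith
        · nlinarith
      have hA0 : A ≤ 0 := by
        rw [hA]
        apply div_nonpos_of_nonpos_of_nonneg hnum
        rw [hDD]; positivity
      linarith
    · set DD : ℝ := (p:ℝ) * ((p:ℝ) - 1) ^ 2 with hDD
      have hD : DD ≠ 0 := by positivity
      set A : ℝ := ((k₂:ℝ) * ((k₂:ℝ) - 1) * ((x - 2 * ((p:ℝ) - (k₂:ℝ))) + S₁ * (x - 2))) / DD with hA
      set B : ℝ := ((2 : ℝ) * (p:ℝ) + (-2 : ℝ) * (p:ℝ) ^ 2 + (-2 : ℝ) * (k₂:ℝ) + (2 : ℝ) * (k₂:ℝ) * (p:ℝ) ^ 2 + (2 : ℝ) * (k₂:ℝ) ^ 2 + (-2 : ℝ) * (k₂:ℝ) ^ 2 * (p:ℝ) + (-1 : ℝ) * x * (p:ℝ) + (1 : ℝ) * x * (p:ℝ) ^ 2 + (-1 : ℝ) * x * (k₂:ℝ) + (1 : ℝ) * x * (k₂:ℝ) ^ 2 + (-4 : ℝ) * x ^ 2 * (k₂:ℝ) * (p:ℝ) ^ 2 + (8 : ℝ) * x ^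 2 * (k₂:ℝ) ^ 2 * (p:ℝ) + (-4 : ℝ) * x ^ 2 * (k₂:ℝ) ^ 3 + (2 : ℝ) * x ^ 3 * (k₂:ℝ) * (p:ℝ) + (-2 : ℝ) * x ^ 3 * (k₂:ℝ) ^ 2 + (4 : ℝ) * S₁ * (p:ℝ) + (-4 : ℝ) * S₁ * (p:ℝ) ^ 2 + (-4 : ℝ) * S₁ * (k₂:ℝ) * (p:ℝ) + (6 : ℝ) * S₁ * (k₂:ℝ) * (p:ℝ) ^ 2 + (4 : ℝ) * S₁ * (k₂:ℝ) ^ 2 + (-6 : ℝ) * S₁ * (k₂:ℝ) ^ 2 * (p:ℝ) + (-2 : ℝ) * S₁ * x * (p:ℝ) + (2 : ℝ) * S₁ * x * (p:ℝ) ^ 2 + (-2 : ℝ) * S₁ * x * (k₂:ℝ) * (p:ℝ) + (2 : ℝ) * S₁ * x * (k₂:ℝ) ^ 2 + (-4 : ℝ) * S₁ * x ^ 2 * (k₂:ℝ) * (p:ℝ) + (4 : ℝ) * S₁ * x ^ 2 * (k₂:ℝ) ^ 2 + (2 : ℝ) * S₁ * x ^ 3 * (k₂:ℝ) * (p:ℝ)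 + (-2 : ℝ) * S₁ * x ^ 3 * (k₂:ℝ) ^ 2 + (2 : ℝ) * S₁ ^ 2 * (p:ℝ) + (-2 : ℝ) * S₁ ^ 2 * (p:ℝ) ^ 2 + (-2 : ℝ) * S₁ ^ 2 * (k₂:ℝ) + (4 : ℝ) * S₁ ^ 2 * (k₂:ℝ) * (p:ℝ) + (-2 : ℝ) * S₁ ^ 2 * (k₂:ℝ) ^ 2 + (-1 : ℝ) * S₁ ^ 2 * x * (p:ℝ) + (1 : ℝ) * S₁ ^ 2 * x * (p:ℝ) ^ 2 + (1 : ℝ) * S₁ ^ 2 * x * (k₂:ℝ) + (-2 : ℝ) * S₁ ^ 2 * x * (k₂:ℝ) * (p:ℝ) + (1 : ℝ) * S₁ ^ 2 * x * (k₂:ℝ) ^ 2) / DD with hB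
      set C : ℝ := ((-1 : ℝ) * x * (p:ℝ) + (1 : ℝ) * x * (p:ℝ) ^ 2 + (4 : ℝ) * x ^ 2 * (k₂:ℝ) * (p:ℝ) + (-4 : ℝ) * x ^ 2 * (k₂:ℝ) * (p:ℝ) ^ 2 + (-4 : ℝ) * x ^ 2 * (k₂:ℝ) ^ 2 + (4 : ℝ) * x ^ 2 * (k₂:ℝ) ^ 2 * (p:ℝ) + (2 : ℝ) * x ^ 3 * (k₂:ℝ) * (p:ℝ) + (-2 : ℝ) * x ^ 3 * (k₂:ℝ) ^ 2 + (2 : ℝ) * S₁ * (k₂:ℝ) + (-4 : ℝ) * S₁ * (k₂:ℝ) * (p:ℝ) + (2 : ℝ) * S₁ * (k₂:ℝ) * (p:ℝ) ^ 2 + (2 : ℝ) * S₁ * (k₂:ℝ) ^ 2 + (-2 : ℝ) * S₁ * (k₂:ℝ) ^ 2 * (p:ℝ) + (-2 : ℝ) * S₁ * x * (p:ℝ) + (2 : ℝ) * S₁ * x * (p:ℝ) ^ 2 + (1 : ℝ) * S₁ * x * (k₂:ℝ) + (-2 : ℝ) * S₁ * x * (k₂:ℝ) * (p:ℝ) + (1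 : ℝ) * S₁ * x * (k₂:ℝ) ^ 2 + (-4 : ℝ) * S₁ * x ^ 2 * (k₂:ℝ) ^ 2 * (p:ℝ) + (4 : ℝ) * S₁ * x ^ 2 * (k₂:ℝ) ^ 3 + (2 : ℝ) * S₁ * x ^ 3 * (k₂:ℝ) * (p:ℝ) + (-2 : ℝ) * S₁ * x ^ 3 * (k₂:ℝ) ^ 2 + (2 : ℝ) * S₁ ^ 2 * (k₂:ℝ) * (p:ℝ) + (-2 : ℝ) * S₁ ^ 2 * (k₂:ℝ) * (p:ℝ) ^ 2 + (-2 : ℝ) * S₁ ^ 2 * (k₂:ℝ) ^ 2 + (4 : ℝ) * S₁ ^ 2 * (k₂:ℝ) ^ 2 * (p:ℝ) + (-2 : ℝ) * S₁ ^ 2 * (k₂:ℝ) ^ 3 + (-1 : ℝ) * S₁ ^ 2 * x * (p:ℝ) + (1 : ℝ) * S₁ ^ 2 * x * (p:ℝ) ^ 2 + (1 : ℝ) * S₁ ^ 2 * x * (k₂:ℝ) + (-2 : ℝ) * S₁ ^ 2 * x * (k₂:ℝ) * (p:ℝ) + (1 : ℝ) * S₁ ^ 2 * x * (k₂:ℝ)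 ^ 2) / DD with hC
      have hfe : (fun s => f S₁ s) =
          fun s => A * s ^ 2 + B * s + C := by
        funext s
        simp only [f, α₁, α₂, α₃, β₁, β₂, β₃, hA, hB, hC, hDD]
        rw [hk1p]
        field_simp
        ring
      rw [hfe, quad_dd]
      have hnum : (k₂:ℝ) * ((k₂:ℝ) - 1) * ((x - 2 * ((p:ℝ) - (k₂:ℝ))) + S₁ * (x - 2)) ≤ 0 := by
        apply mul_nonpos_of_nonneg_of_nonpos
        · nlinarith
        · nlinarith
      have hA0 : A ≤ 0 := by
        rw [hA]
        apply div_nonpos_of_nonpos_of_nonneg hnum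
        rw [hDD]; positivity
      linarith
  · rw [hfeq]
    have hα₃ : (0:ℝ) ≤ α₃ := by
      simp only [α₃]
      positivity
    have h1 : (0:ℝ) ≤ (1 + x ^ 2) ^ 2 := by positivity
    have h2 : (0:ℝ) ≤ (1 - x) ^ 2 := by positivity
    nlinarith [mul_nonneg (mul_nonneg h1 hα₃) hx0]
end
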